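/- arXiv:1503.08368 — 5 statements merged into one kernel-verified Lean document; each statement's English description precedes it below -/
import Mathlib

section
/- For all integers n ≥ 1 and a ≥ 1, the sum over all permutations π in the symmetric group S_n of the binomial coefficient C(n + a − 1 − des(π), n) equals a^n, where des(π) = #{i ∈ {1,…,n−1} : π(i) > π(i+1)} is the number of descents of π. (Equivalently: each row of the Bayer–Diaconis a-shuffle transition matrix sums to 1, so it is a stochastic matrix.) -/
open Finset

/-- 0-indexed descent set of a deck arrangement: `i ∈ desSet n σ` iff the card at
position `i` is greater than the card at position `i+1` (positions `0, …, n-2`). -/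
def desSet (n : ℕ) (σ : Equiv.Perm (Fin n)) : Finset ℕ :=
  (Finset.range (n - 1)).filter
    (fun i => ∃ h : i + 1 < n, σ ⟨i + 1, h⟩ < σ ⟨i, Nat.lt_of_succ_lt h⟩)

/-- `des σ` is the number of descents of `σ`. -/
def des (n : ℕ) (σ : Equiv.Perm (Fin n)) : ℕ := (desSet n σ).card

/-- adjacent ≤ implies monotone, ℕ-indexed version for Fin n -/
lemma adjMono {α : Type*} [Preorder α] {n : ℕ} {f : Fin n → α}
    (h : ∀ k (hk : k + 1 < n), f ⟨k, Nat.lt_of_succ_lt hk⟩ ≤ f ⟨k + 1, hk⟩) :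
    Monotone f := by
  intro i j hij
  have key : ∀ d, ∀ j : Fin n, (j : ℕ) = (i : ℕ) + d → f i ≤ f j := by
    intro d
    induction d with
    | zero =>
      intro j hj
      have : i = j := Fin.ext (by omega)
      rw [← this]
    | succ d ih =>
      intro j hj
      have hk : (i : ℕ) + d + 1 < n := by have := j.isLt; omega
      have h1 := ih ⟨(i : ℕ) + d, Nat.lt_of_succ_lt hk⟩ rfl
      have h2 := h ((i : ℕ) + d) hk
      have hje : j = ⟨(i : ℕ) + d + 1, hk⟩ := Fin.ext (by simp only [Fin.val_mk]; omega)
      rw [hje]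
      exact h1.trans h2
  exact key ((j : ℕ) - (i : ℕ)) j (by have := Fin.le_def.1 hij; omega)

lemma strictGap {n m : ℕ} {f : Fin n → Fin m} (hf : StrictMono f) (i j : Fin n) (hij : i ≤ j) :
    (f i : ℕ) + ((j : ℕ) - (i : ℕ)) ≤ (f j : ℕ) := by
  have key : ∀ d, ∀ j : Fin n, (j : ℕ) = (i : ℕ) + d → (f i : ℕ) + d ≤ (f j : ℕ) := by
    intro d
    induction d with
    | zero =>
      intro j hj
      have : i = j := Fin.ext (by omega)
      rw [← this]; omega
    | succ d ih =>
      intro j hj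
      have hk : (i : ℕ) + d < n := by have := j.isLt; omega
      have h1 := ih ⟨(i : ℕ) + d, hk⟩ rfl
      have h2 : f ⟨(i : ℕ) + d, hk⟩ < f j := hf (by rw [Fin.lt_def]; simp; omega)
      rw [Fin.lt_def] at h2
      omega
  have := key ((j : ℕ) - (i : ℕ)) j (by have := Fin.le_def.1 hij; omega)
  have := Fin.le_def.1 hij
  omega

def sCnt (S : Finset ℕ) (k : ℕ) : ℕ := (S.filter (· < k)).card

lemma sCnt_zero (S : Finset ℕ) : sCnt S 0 = 0 := by
  simp [sCnt]

lemma sCnt_succ_mem (S : Finset ℕ) {k : ℕ} (h : k ∈ S) : sCnt S (k + 1) = sCnt S k + 1 := by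
  unfold sCnt
  rw [show S.filter (· < k + 1) = insert k (S.filter (· < k)) from ?_,
    Finset.card_insert_of_notMem (by simp)]
  ext x
  simp only [Finset.mem_insert, Finset.mem_filter]
  constructor
  · rintro ⟨hx, hlt⟩
    rcases Nat.lt_succ_iff_lt_or_eq.1 hlt with h' | h'
    · exact Or.inr ⟨hx, h'⟩
    · exact Or.inl h'
  · rintro (rfl | ⟨hx, hlt⟩)
    · exact ⟨h, Nat.lt_succ_self _⟩
    · exact ⟨hx, Nat.lt_succ_of_lt hlt⟩

lemma sCnt_succ_notMem (S : Finset ℕ) {k : ℕ} (h : k ∉ S) : sCnt S (k + 1) = sCnt S k := by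
  unfold sCnt
  congr 1
  ext x
  simp only [Finset.mem_filter]
  constructor
  · rintro ⟨hx, hlt⟩
    refine ⟨hx, ?_⟩
    rcases Nat.lt_succ_iff_lt_or_eq.1 hlt with h' | rfl
    · exact h'
    · exact absurd hx h
  · rintro ⟨hx, hlt⟩
    exact ⟨hx, Nat.lt_succ_of_lt hlt⟩

lemma sCnt_le_self (S : Finset ℕ) (k : ℕ) : sCnt S k ≤ k := by
  calc sCnt S k ≤ (Finset.range k).card :=
        Finset.card_le_card (fun x hx => Finset.mem_range.2 (Finset.mem_filter.1 hx).2)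
    _ = k := Finset.card_range k

lemma sCnt_le_card (S : Finset ℕ) (k : ℕ) : sCnt S k ≤ S.card :=
  Finset.card_le_card (Finset.filter_subset _ _)

lemma sCnt_eq_card {S : Finset ℕ} {b k : ℕ} (hS : S ⊆ Finset.range b) (h : b ≤ k) :
    sCnt S k = S.card := by
  unfold sCnt
  congr 1
  apply Finset.filter_true_of_mem
  intro x hx
  have := Finset.mem_range.1 (hS hx)
  omega

lemma sCnt_key {S : Finset ℕ} {b k : ℕ} (hS : S ⊆ Finset.range b) (h : k ≤ b) :
    k + S.card ≤ b + sCnt S k := by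
  have h1 : (S.filter (fun x => ¬ x < k)).card ≤ b - k := by
    calc (S.filter (fun x => ¬ x < k)).card ≤ (Finset.Ico k b).card := by
          apply Finset.card_le_card
          intro x hx
          rw [Finset.mem_filter] at hx
          have := Finset.mem_range.1 (hS hx.1)
          rw [Finset.mem_Ico]
          omega
      _ = b - k := Nat.card_Ico k b
  have h2 := Finset.card_filter_add_card_filter_not (s := S) (p := (· < k))
  unfold sCnt
  omega
lemma cardStrictMono (n m : ℕ) :
    (univ.filter (fun g : Fin n → Fin m => StrictMono g)).card = m.choose n := by
  have key : (univ.filter (fun g : Fin n → Fin m => StrictMono g)).card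
      = (Finset.powersetCard n (univ : Finset (Fin m))).card := by
    refine Finset.card_bij' (fun g _ => Finset.image g univ)
      (fun T hT => fun k => T.orderEmbOfFin (Finset.mem_powersetCard.1 hT).2 k) ?_ ?_ ?_ ?_
    · intro g hg
      rw [Finset.mem_filter] at hg
      rw [Finset.mem_powersetCard]
      exact ⟨Finset.subset_univ _, by
        rw [Finset.card_image_of_injective _ hg.2.injective, Finset.card_univ, Fintype.card_fin]⟩
    · intro T hT
      exact Finset.mem_filter.2 ⟨Finset.mem_univ _, (T.orderEmbOfFin _).strictMono⟩
    · intro g hg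
      rw [Finset.mem_filter] at hg
      exact (Finset.orderEmbOfFin_unique _ (fun x => Finset.mem_image_of_mem g (mem_univ x))
        hg.2).symm
    · intro T hT
      apply Finset.eq_of_subset_of_card_le
      · intro x hx
        rcases Finset.mem_image.1 hx with ⟨k, _, rfl⟩
        exact Finset.orderEmbOfFin_mem _ _ _
      · rw [Finset.card_image_of_injective _ (T.orderEmbOfFin _).injective, Finset.card_univ,
          Fintype.card_fin, (Finset.mem_powersetCard.1 hT).2]
  rw [key, Finset.card_powersetCard, Finset.card_univ, Fintype.card_fin]

lemma adjStrict {α : Type*} [Preorder α] {n : ℕ} {f : Fin n → α}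
    (h : ∀ k (hk : k + 1 < n), f ⟨k, Nat.lt_of_succ_lt hk⟩ < f ⟨k + 1, hk⟩) :
    StrictMono f := by
  intro i j hij
  have key : ∀ d, ∀ j : Fin n, (j : ℕ) = (i : ℕ) + d + 1 → f i < f j := by
    intro d
    induction d with
    | zero =>
      intro j hj
      have hk : (i : ℕ) + 1 < n := by have := j.isLt; omega
      have : j = ⟨(i : ℕ) + 1, hk⟩ := Fin.ext (by simp only [Fin.val_mk]; omega)
      rw [this]
      have := h (i : ℕ) hk
      simpa using this
    | succ d ih =>
      intro j hj
      have hk : (i : ℕ) + d + 1 + 1 < n := by have := j.isLt; omega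
      have h1 := ih ⟨(i : ℕ) + d + 1, Nat.lt_of_succ_lt hk⟩ (by simp only [Fin.val_mk])
      have h2 := h ((i : ℕ) + d + 1) hk
      have hje : j = ⟨(i : ℕ) + d + 1 + 1, hk⟩ := Fin.ext (by simp only [Fin.val_mk]; omega)
      rw [hje]
      exact h1.trans h2
  exact key ((j : ℕ) - (i : ℕ) - 1) j (by have := Fin.lt_def.1 hij; omega)

lemma cardMonoStrict (n a : ℕ) (hn : 1 ≤ n) (S : Finset ℕ) (hS : S ⊆ Finset.range (n - 1))
    (hd : S.card < a) :
    (univ.filter (fun y : Fin n → Fin a => Monotone y ∧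
      ∀ k ∈ S, ∀ h : k + 1 < n, y ⟨k, Nat.lt_of_succ_lt h⟩ < y ⟨k + 1, h⟩)).card
      = (n + a - 1 - S.card).choose n := by
  set d := S.card with hdS
  set m := n + a - 1 - d with hm
  rw [← cardStrictMono n m]
  have hbfwd : ∀ (y : Fin n → Fin a) (i : Fin n), (y i : ℕ) + ((i : ℕ) - sCnt S i) < m := by
    intro y i
    have h1 : (y i : ℕ) < a := (y i).isLt
    have h2 : (i : ℕ) < n := i.isLt
    have h3 := sCnt_le_self S (i : ℕ)
    have h4 := sCnt_key hS (show (i : ℕ) ≤ n - 1 by omega)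
    omega
  refine Finset.card_bij'
    (fun y _ => fun i : Fin n => (⟨(y i : ℕ) + ((i : ℕ) - sCnt S i), hbfwd y i⟩ : Fin m))
    (fun g hg => fun i : Fin n =>
      (⟨(g i : ℕ) - ((i : ℕ) - sCnt S i), by
        have hgs : StrictMono g := (Finset.mem_filter.1 hg).2
        have h1 := strictGap hgs i ⟨n - 1, by omega⟩ (by rw [Fin.le_def]; simp; omega)
        have h2 : (g ⟨n - 1, by omega⟩ : ℕ) < m := (g _).isLt
        have h3 := sCnt_le_self S (i : ℕ)
        have h4 := sCnt_le_card S (i : ℕ)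
        have h5 : (i : ℕ) < n := i.isLt
        simp only [Fin.val_mk] at h1
        omega⟩ : Fin a)) ?_ ?_ ?_ ?_
  · -- forward lands in strictmono filter
    intro y hy
    rw [Finset.mem_filter] at hy ⊢
    refine ⟨Finset.mem_univ _, ?_⟩
    apply adjStrict
    intro k hk
    rw [Fin.lt_def]
    simp only [Fin.val_mk]
    have h3 := sCnt_le_self S k
    by_cases hkS : k ∈ S
    · have hs := sCnt_succ_mem S hkS
      have hstrict := hy.2.2 k hkS hk
      rw [Fin.lt_def] at hstrict
      omega
    · have hs := sCnt_succ_notMem S hkS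
      have hmono := hy.2.1 (show (⟨k, Nat.lt_of_succ_lt hk⟩ : Fin n) ≤ ⟨k + 1, hk⟩ by
        rw [Fin.le_def]; simp)
      rw [Fin.le_def] at hmono
      omega
  · -- backward lands in mono+strict filter
    intro g hg
    have hgs : StrictMono g := (Finset.mem_filter.1 hg).2
    have hge : ∀ i : Fin n, (i : ℕ) ≤ (g i : ℕ) := by
      intro i
      have := strictGap hgs ⟨0, by omega⟩ i (by rw [Fin.le_def]; simp)
      simp only [Fin.val_mk, Nat.sub_zero] at this
      omega
    rw [Finset.mem_filter]
    refine ⟨Finset.mem_univ _, ?_, ?_⟩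
    · apply adjMono
      intro k hk
      rw [Fin.le_def]
      simp only [Fin.val_mk]
      have hlt := hgs (show (⟨k, Nat.lt_of_succ_lt hk⟩ : Fin n) < ⟨k + 1, hk⟩ by
        rw [Fin.lt_def]; simp)
      rw [Fin.lt_def] at hlt
      have h3 := sCnt_le_self S k
      have hg1 := hge ⟨k, Nat.lt_of_succ_lt hk⟩
      have hg2 := hge ⟨k + 1, hk⟩
      simp only [Fin.val_mk] at hg1 hg2
      by_cases hkS : k ∈ S
      · have hs := sCnt_succ_mem S hkS
        omega
      · have hs := sCnt_succ_notMem S hkS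
        omega
    · intro k hkS hk
      rw [Fin.lt_def]
      simp only [Fin.val_mk]
      have hlt := hgs (show (⟨k, Nat.lt_of_succ_lt hk⟩ : Fin n) < ⟨k + 1, hk⟩ by
        rw [Fin.lt_def]; simp)
      rw [Fin.lt_def] at hlt
      have h3 := sCnt_le_self S k
      have hg1 := hge ⟨k, Nat.lt_of_succ_lt hk⟩
      have hg2 := hge ⟨k + 1, hk⟩
      simp only [Fin.val_mk] at hg1 hg2
      have hs := sCnt_succ_mem S hkS
      omega
  · -- left inverse
    intro y hy
    funext i
    apply Fin.ext
    simp only [Fin.val_mk]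
    omega
  · -- right inverse
    intro g hg
    have hgs : StrictMono g := (Finset.mem_filter.1 hg).2
    funext i
    apply Fin.ext
    simp only [Fin.val_mk]
    have hge := strictGap hgs ⟨0, by omega⟩ i (by rw [Fin.le_def]; simp)
    simp only [Fin.val_mk] at hge
    have h3 := sCnt_le_self S (i : ℕ)
    omega

lemma monoStrict_empty (n a : ℕ) (hn : 1 ≤ n) (S : Finset ℕ) (hS : S ⊆ Finset.range (n - 1))
    (hd : a ≤ S.card) :
    (univ.filter (fun y : Fin n → Fin a => Monotone y ∧
      ∀ k ∈ S, ∀ h : k + 1 < n, y ⟨k, Nat.lt_of_succ_lt h⟩ < y ⟨k + 1, h⟩)).card = 0 := by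
  rw [Finset.card_eq_zero, Finset.filter_eq_empty_iff]
  rintro y - ⟨hy1, hy2⟩
  have H : ∀ k (hk : k < n), sCnt S k ≤ (y ⟨k, hk⟩ : ℕ) := by
    intro k
    induction k with
    | zero => intro hk; simp [sCnt_zero]
    | succ k ih =>
      intro hk
      have hk' : k < n := Nat.lt_of_succ_lt hk
      by_cases hkS : k ∈ S
      · have hs := sCnt_succ_mem S hkS
        have hstrict := hy2 k hkS hk
        rw [Fin.lt_def] at hstrict
        have := ih hk'
        omega
      · have hs := sCnt_succ_notMem S hkS
        have hmono := hy1 (show (⟨k, hk'⟩ : Fin n) ≤ ⟨k + 1, hk⟩ by rw [Fin.le_def]; simp)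
        rw [Fin.le_def] at hmono
        have := ih hk'
        omega
  have h1 := H (n - 1) (by omega)
  have h2 : sCnt S (n - 1) = S.card := sCnt_eq_card hS le_rfl
  have h3 : (y ⟨n - 1, by omega⟩ : ℕ) < a := (y _).isLt
  omega

/-- fibers of `Tuple.sort` -/
lemma sort_eq_iff {n a : ℕ} (σ : Equiv.Perm (Fin n)) (w : Fin n → Fin a) :
    Tuple.sort w = σ ↔ (Monotone (w ∘ σ) ∧ ∀ k ∈ desSet n σ, ∀ h : k + 1 < n,
      w (σ ⟨k, Nat.lt_of_succ_lt h⟩) < w (σ ⟨k + 1, h⟩)) := by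
  rw [eq_comm, Tuple.eq_sort_iff]
  constructor
  · rintro ⟨hm, ht⟩
    refine ⟨hm, ?_⟩
    intro k hkS hk
    rw [desSet, Finset.mem_filter] at hkS
    obtain ⟨-, h', hlt⟩ := hkS
    have hle : w (σ ⟨k, Nat.lt_of_succ_lt hk⟩) ≤ w (σ ⟨k + 1, hk⟩) :=
      hm (show (⟨k, Nat.lt_of_succ_lt hk⟩ : Fin n) ≤ ⟨k + 1, hk⟩ by rw [Fin.le_def]; simp)
    rcases hle.lt_or_eq with h | h
    · exact h
    · exfalso
      have := ht ⟨k, Nat.lt_of_succ_lt hk⟩ ⟨k + 1, hk⟩ (by rw [Fin.lt_def]; simp) h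
      exact absurd hlt (not_lt.2 this.le)
  · rintro ⟨hm, hs⟩
    refine ⟨hm, ?_⟩
    intro i j hij heq
    have adj : ∀ k (hk1 : (i : ℕ) ≤ k) (hk2 : k + 1 ≤ (j : ℕ)),
        σ ⟨k, by have := j.isLt; omega⟩ < σ ⟨k + 1, by have := j.isLt; omega⟩ := by
      intro k hk1 hk2
      have hkn : k + 1 < n := by have := j.isLt; omega
      have e1 : w (σ i) ≤ w (σ ⟨k, Nat.lt_of_succ_lt hkn⟩) :=
        hm (show i ≤ (⟨k, Nat.lt_of_succ_lt hkn⟩ : Fin n) by rw [Fin.le_def]; simpa)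
      have e2 : w (σ ⟨k, Nat.lt_of_succ_lt hkn⟩) ≤ w (σ ⟨k + 1, hkn⟩) :=
        hm (show (⟨k, Nat.lt_of_succ_lt hkn⟩ : Fin n) ≤ ⟨k + 1, hkn⟩ by rw [Fin.le_def]; simp)
      have e3 : w (σ ⟨k + 1, hkn⟩) ≤ w (σ j) :=
        hm (show (⟨k + 1, hkn⟩ : Fin n) ≤ j by rw [Fin.le_def]; simpa)
      have hwk : w (σ ⟨k, Nat.lt_of_succ_lt hkn⟩) = w (σ ⟨k + 1, hkn⟩) := by
        apply le_antisymm e2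
        calc w (σ ⟨k + 1, hkn⟩) ≤ w (σ j) := e3
          _ = w (σ i) := heq.symm
          _ ≤ _ := e1
      by_contra hcon
      rw [not_lt] at hcon
      rcases hcon.lt_or_eq with hlt | hs'
      · -- descent at k
        have hmem : k ∈ desSet n σ := by
          rw [desSet, Finset.mem_filter, Finset.mem_range]
          exact ⟨by omega, hkn, hlt⟩
        have := hs k hmem hkn
        exact absurd hwk this.ne
      · have heqk : (⟨k, Nat.lt_of_succ_lt hkn⟩ : Fin n) = ⟨k + 1, hkn⟩ := σ.injective hs'.symm
        have := congrArg Fin.val heqk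
        simp at this
    have key : ∀ d (hk : (i : ℕ) + d + 1 ≤ (j : ℕ)),
        σ i < σ ⟨(i : ℕ) + d + 1, by have := j.isLt; omega⟩ := by
      intro d
      induction d with
      | zero =>
        intro hk
        have := adj (i : ℕ) le_rfl hk
        convert this using 3
      | succ d ih =>
        intro hk
        have h1 := ih (by omega)
        have h2 := adj ((i : ℕ) + d + 1) (by omega) (by omega)
        exact h1.trans h2
    have hfin := key ((j : ℕ) - (i : ℕ) - 1) (by have := Fin.lt_def.1 hij; omega)
    have hje : (⟨(i : ℕ) + ((j : ℕ) - (i : ℕ) - 1) + 1, by have := j.isLt; omega⟩ : Fin n) = j :=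
      Fin.ext (by simp only [Fin.val_mk]; have := Fin.lt_def.1 hij; omega)
    rwa [hje] at hfin

/-- Each row of the Bayer–Diaconis `a`-shuffle transition matrix sums to `1`:
`Σ_{π ∈ S_n} C(n + a - 1 - des(π), n) = a^n`. -/
theorem stmt0 (n a : ℕ) (hn : 1 ≤ n) (ha : 1 ≤ a) :
    ∑ π : Equiv.Perm (Fin n), (n + a - 1 - des n π).choose n = a ^ n := by
  have h1 : a ^ n = (univ : Finset (Fin n → Fin a)).card := by
    rw [Finset.card_univ, Fintype.card_fun, Fintype.card_fin, Fintype.card_fin]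
  rw [h1, Finset.card_eq_sum_card_fiberwise
    (f := fun w : Fin n → Fin a => Tuple.sort w) (t := univ) (fun x _ => Finset.mem_univ _)]
  refine Finset.sum_congr rfl (fun σ _ => ?_)
  have hsub : desSet n σ ⊆ Finset.range (n - 1) := Finset.filter_subset _ _
  have hfib : (univ.filter fun w : Fin n → Fin a => Tuple.sort w = σ).card
      = (univ.filter (fun y : Fin n → Fin a => Monotone y ∧
        ∀ k ∈ desSet n σ, ∀ h : k + 1 < n, y ⟨k, Nat.lt_of_succ_lt h⟩ < y ⟨k + 1, h⟩)).card := by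
    refine Finset.card_bij' (fun w _ => w ∘ σ) (fun y _ => y ∘ σ.symm) ?_ ?_ ?_ ?_
    · intro w hw
      rw [Finset.mem_filter] at hw ⊢
      have h2 := (sort_eq_iff σ w).1 hw.2
      exact ⟨Finset.mem_univ _, h2.1, fun k hk h => h2.2 k hk h⟩
    · intro y hy
      rw [Finset.mem_filter] at hy ⊢
      refine ⟨Finset.mem_univ _, ?_⟩
      rw [sort_eq_iff]
      have hyy : (y ∘ ⇑σ.symm) ∘ ⇑σ = y := by funext x; simp
      constructor
      · rw [hyy]; exact hy.2.1
      · intro k hk h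
        show (y ∘ ⇑σ.symm) (σ _) < (y ∘ ⇑σ.symm) (σ _)
        simp only [Function.comp_apply, Equiv.symm_apply_apply]
        exact hy.2.2 k hk h
    · intro w _; funext x; simp
    · intro y _; funext x; simp
  rw [hfib, des]
  by_cases hda : (desSet n σ).card < a
  · rw [cardMonoStrict n a hn (desSet n σ) hsub hda]
  · have hda' : a ≤ (desSet n σ).card := not_lt.1 hda
    rw [monoStrict_empty n a hn (desSet n σ) hsub hda']
    have hlt : n + a - 1 - (desSet n σ).card < n := by
      clear hda hsub hfib
      omega
    exact Nat.choose_eq_zero_of_lt hlt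
end

section
/- For all integers n ≥ 1 and a ≥ 1, every column of the a-handed riffle shuffle transition matrix P_a on S_n sums to 1; consequently the uniform distribution on S_n is a stationary distribution of the a-handed riffle shuffle chain: for every τ ∈ S_n, Σ_{σ ∈ S_n} (1/n!)·P_a(σ,τ) = 1/n!. -/
open Finset

/-- Bayer–Diaconis `a`-handed riffle shuffle transition matrix on `S_n`:
`Pa n a σ τ = C(n + a - 1 - des(τ⁻¹∘σ), n) / a^n`. -/
def Pa (n a : ℕ) : Matrix (Equiv.Perm (Fin n)) (Equiv.Perm (Fin n)) ℚ :=
  fun σ τ => ((n + a - 1 - des n (τ⁻¹ * σ)).choose n : ℚ) / (a : ℚ) ^ n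



/-- Number of strictly monotone maps `Fin k → Fin m` is `m.choose k`. -/
lemma myCardStrictMono (k m : ℕ) :
    Nat.card {f : Fin k → Fin m // StrictMono f} = m.choose k := by
  classical
  have e : {f : Fin k → Fin m // StrictMono f} ≃ {s : Finset (Fin m) // s.card = k} :=
    { toFun := fun f => ⟨Finset.univ.image f.1, by
        rw [Finset.card_image_of_injective _ f.2.injective, Finset.card_univ, Fintype.card_fin]⟩
      invFun := fun s => ⟨s.1.orderEmbOfFin s.2, (s.1.orderEmbOfFin s.2).strictMono⟩
      left_inv := fun f => by
        ext1
        exact (Finset.orderEmbOfFin_unique _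
          (fun x => Finset.mem_image_of_mem _ (Finset.mem_univ x)) f.2).symm
      right_inv := fun s => by
        ext1
        rw [← Finset.coe_inj, Finset.coe_image, Finset.coe_univ, Set.image_univ,
          Finset.range_orderEmbOfFin] }
  rw [Nat.card_congr e, Nat.card_eq_fintype_card, Fintype.card_subtype,
    ← Finset.powerset_univ, ← Finset.powersetCard_eq_filter, Finset.card_powersetCard,
    Finset.card_univ, Fintype.card_fin]

/-- gap lemma for strictly monotone maps -/
lemma myStrictGap {n m : ℕ} {z : Fin n → Fin m} (hz : StrictMono z) :
    ∀ (j : ℕ) (hj : j < n) (i : ℕ) (hij : i ≤ j),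
      (z ⟨i, lt_of_le_of_lt hij hj⟩ : ℕ) + (j - i) ≤ z ⟨j, hj⟩ := by
  intro j
  induction j with
  | zero => intro hj i hij; interval_cases i; simp
  | succ j ih =>
    intro hj i hij
    rcases Nat.lt_or_ge i (j+1) with h | h
    · have hij' : i ≤ j := by omega
      have hjn : j < n := by omega
      have h1 := ih hjn i hij'
      have h2 : z ⟨j, hjn⟩ < z ⟨j+1, hj⟩ := hz (by simp [Fin.mk_lt_mk])
      have h2' : (z ⟨j, hjn⟩ : ℕ) < z ⟨j+1, hj⟩ := h2
      omega
    · have : i = j + 1 := by omega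
      subst this
      simp

/-- chain lemma: strict version -/
lemma myChainLt {α : Type*} [Preorder α] {n : ℕ} (g : Fin n → α) :
    ∀ (j : ℕ) (hj : j < n) (i : ℕ) (hij : i < j),
      (∀ k, i ≤ k → k + 1 ≤ j → ∀ h : k + 1 < n,
        g ⟨k, Nat.lt_of_succ_lt h⟩ < g ⟨k+1, h⟩) →
      g ⟨i, lt_trans hij hj⟩ < g ⟨j, hj⟩ := by
  intro j
  induction j with
  | zero => omega
  | succ j ih =>
    intro hj i hij hchain
    rcases Nat.lt_or_ge i j with h | h
    · exact lt_trans (ih (by omega) i h (fun k hk hk' h' => hchain k hk (by omega) h'))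
        (hchain j (by omega) le_rfl hj)
    · have : i = j := by omega
      subst this
      exact hchain i le_rfl le_rfl hj

/-- chain lemma: weak version -/
lemma myChainLe {α : Type*} [Preorder α] {n : ℕ} (g : Fin n → α) :
    ∀ (j : ℕ) (hj : j < n) (i : ℕ) (hij : i ≤ j),
      (∀ k, i ≤ k → k + 1 ≤ j → ∀ h : k + 1 < n,
        g ⟨k, Nat.lt_of_succ_lt h⟩ ≤ g ⟨k+1, h⟩) →
      g ⟨i, lt_of_le_of_lt hij hj⟩ ≤ g ⟨j, hj⟩ := by
  intro j
  induction j with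
  | zero => intro hj i hij _; interval_cases i; simp
  | succ j ih =>
    intro hj i hij hchain
    rcases Nat.lt_or_ge i (j+1) with h | h
    · exact le_trans (ih (by omega) i (by omega) (fun k hk hk' h' => hchain k hk (by omega) h'))
        (hchain j (by omega) le_rfl hj)
    · have : i = j + 1 := by omega
      subst this
      simp

/-- The "compatible sequence" predicate. -/
def myGap (n a : ℕ) (D : Finset ℕ) (y : Fin n → Fin a) : Prop :=
  ∀ i : ℕ, ∀ h : i + 1 < n,
    y ⟨i, Nat.lt_of_succ_lt h⟩ ≤ y ⟨i+1, h⟩ ∧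
      (i ∈ D → y ⟨i, Nat.lt_of_succ_lt h⟩ < y ⟨i+1, h⟩)

lemma myDC_le (D : Finset ℕ) (i : ℕ) : (D ∩ Finset.range i).card ≤ i := by
  calc (D ∩ Finset.range i).card ≤ (Finset.range i).card :=
        Finset.card_le_card Finset.inter_subset_right
    _ = i := Finset.card_range i

lemma myDC_succ (D : Finset ℕ) (i : ℕ) :
    (D ∩ Finset.range (i+1)).card
      = (D ∩ Finset.range i).card + (if i ∈ D then 1 else 0) := by
  rw [Finset.range_add_one]
  by_cases h : i ∈ D
  · rw [Finset.inter_insert_of_mem h, Finset.card_insert_of_notMem (by simp), if_pos h]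
  · rw [Finset.inter_insert_of_notMem h, if_neg h]
    simp

lemma myDC_ge {n : ℕ} {D : Finset ℕ} (hD : D ⊆ Finset.range (n-1)) (i : ℕ) :
    D.card ≤ (D ∩ Finset.range i).card + (n - 1 - i) := by
  have h1 : (D ∩ Finset.range i).card + (D \ Finset.range i).card = D.card :=
    Finset.card_inter_add_card_sdiff D (Finset.range i)
  have h2 : (D \ Finset.range i).card ≤ (Finset.Ico i (n-1)).card := by
    apply Finset.card_le_card
    intro x hx
    rw [Finset.mem_sdiff, Finset.mem_range] at hx
    have := hD hx.1
    rw [Finset.mem_range] at this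
    rw [Finset.mem_Ico]
    omega
  rw [Nat.card_Ico] at h2
  omega

lemma myDC_subset (D : Finset ℕ) (i : ℕ) : (D ∩ Finset.range i).card ≤ D.card :=
  Finset.card_le_card Finset.inter_subset_left

lemma myCardGap (n a : ℕ) (ha : 1 ≤ a) (D : Finset ℕ) (hD : D ⊆ Finset.range (n-1)) :
    Nat.card {y : Fin n → Fin a // myGap n a D y} = (n + a - 1 - D.card).choose n := by
  classical
  set d := D.card with hd
  have hdn : d ≤ n - 1 := by
    rw [hd, ← Finset.card_range (n-1)]; exact Finset.card_le_card hD
  set m := n + a - 1 - d with hm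
  -- equivalence with strictly monotone maps into `Fin m`
  have e : {y : Fin n → Fin a // myGap n a D y} ≃ {z : Fin n → Fin m // StrictMono z} := by
    refine
      { toFun := fun y => ⟨fun i => ⟨(y.1 i : ℕ) + (i : ℕ) - (D ∩ Finset.range i).card, ?_⟩, ?_⟩
        invFun := fun z => ⟨fun i => ⟨(z.1 i : ℕ) + (D ∩ Finset.range i).card - (i : ℕ), ?_⟩, ?_⟩
        left_inv := ?_
        right_inv := ?_ }
    · -- bound for toFun
      have h1 : (y.1 i : ℕ) < a := (y.1 i).isLt
      have h2 := myDC_le D i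
      have h3 := myDC_ge hD (i : ℕ)
      have h4 : (i : ℕ) < n := i.isLt
      omega
    · -- strict monotonicity of toFun
      intro i j hij
      have hij' : (i : ℕ) < (j : ℕ) := hij
      have := myChainLt (n := n)
        (fun i => (⟨(y.1 i : ℕ) + (i : ℕ) - (D ∩ Finset.range i).card, by
          have h1 : (y.1 i : ℕ) < a := (y.1 i).isLt
          have h2 := myDC_le D i
          have h3 := myDC_ge hD (i : ℕ)
          have h4 : (i : ℕ) < n := i.isLt
          omega⟩ : Fin m)) (j : ℕ) j.isLt (i : ℕ) hij' ?_
      · simpa using this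
      · intro k hk hk' h'
        have hy := y.2 k h'
        have h1 : (y.1 ⟨k, Nat.lt_of_succ_lt h'⟩ : ℕ) ≤ y.1 ⟨k+1, h'⟩ := hy.1
        have h2 : k ∈ D → (y.1 ⟨k, Nat.lt_of_succ_lt h'⟩ : ℕ) < y.1 ⟨k+1, h'⟩ := hy.2
        have h3 := myDC_succ D k
        have h4 := myDC_le D k
        simp only [Fin.mk_lt_mk]
        by_cases hkD : k ∈ D
        · have := h2 hkD; rw [if_pos hkD] at h3; omega
        · rw [if_neg hkD] at h3; omega
    · -- bound for invFun
      have h0 : (i : ℕ) < n := i.isLt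
      have hlast : n - 1 < n := by omega
      have hgap := myStrictGap z.2 (n-1) hlast (i : ℕ) (by omega)
      have h1 : (z.1 ⟨n-1, hlast⟩ : ℕ) < m := (z.1 ⟨n-1, hlast⟩).isLt
      have h2 := myDC_le D (i : ℕ)
      have h3 := myDC_subset D (i : ℕ)
      have h4 : (z.1 ⟨(i:ℕ), i.isLt⟩ : ℕ) + (n - 1 - i) ≤ z.1 ⟨n-1, hlast⟩ := by
        convert hgap using 3
      have h5 : (z.1 i : ℕ) = z.1 ⟨(i:ℕ), i.isLt⟩ := by congr
      have h1' : (z.1 ⟨n-1, hlast⟩ : ℕ) < n + a - 1 - d := lt_of_lt_of_eq h1 hm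
      omega
    · -- gap property of invFun
      intro k h'
      have hk : k < n := Nat.lt_of_succ_lt h'
      have hlt : z.1 ⟨k, hk⟩ < z.1 ⟨k+1, h'⟩ := z.2 (by simp [Fin.mk_lt_mk])
      have hlt' : (z.1 ⟨k, hk⟩ : ℕ) < z.1 ⟨k+1, h'⟩ := hlt
      have hge : (k : ℕ) ≤ z.1 ⟨k, hk⟩ := by
        have h6 := myStrictGap z.2 k hk 0 (Nat.zero_le _)
        omega
      have h3 := myDC_succ D k
      have h4 := myDC_le D k
      constructor
      · simp only [Fin.mk_le_mk]
        by_cases hkD : k ∈ D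
        · rw [if_pos hkD] at h3; omega
        · rw [if_neg hkD] at h3; omega
      · intro hkD
        rw [if_pos hkD] at h3
        simp only [Fin.mk_lt_mk]
        omega
    · -- left inverse
      intro y
      ext i : 2
      dsimp only
      apply Fin.ext
      simp only [Fin.val_mk]
      have h1 : (y.1 i : ℕ) < a := (y.1 i).isLt
      have h2 := myDC_le D (i : ℕ)
      omega
    · -- right inverse
      intro z
      ext i : 2
      dsimp only
      apply Fin.ext
      simp only [Fin.val_mk]
      have hge : (i : ℕ) ≤ z.1 i := by
        have h6 := myStrictGap z.2 (i : ℕ) i.isLt 0 (Nat.zero_le _)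
        have h5 : z.1 ⟨(i:ℕ), i.isLt⟩ = z.1 i := by congr
        rw [h5] at h6
        omega
      have h2 := myDC_le D (i : ℕ)
      omega
  rw [Nat.card_congr e, myCardStrictMono]
lemma myMemDesSet {n : ℕ} (σ : Equiv.Perm (Fin n)) (i : ℕ) (h : i + 1 < n) :
    i ∈ desSet n σ ↔ σ ⟨i+1, h⟩ < σ ⟨i, Nat.lt_of_succ_lt h⟩ := by
  unfold desSet
  simp only [Finset.mem_filter, Finset.mem_range]
  constructor
  · rintro ⟨-, h', hlt⟩
    exact hlt
  · intro hlt
    exact ⟨by omega, h, hlt⟩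

lemma mySortIff {n a : ℕ} (σ : Equiv.Perm (Fin n)) (w : Fin n → Fin a) :
    Tuple.sort w = σ ↔ myGap n a (desSet n σ) (fun i => w (σ i)) := by
  rw [eq_comm, Tuple.eq_sort_iff]
  constructor
  · rintro ⟨hmono, htie⟩ i h
    have hle : (⟨i, Nat.lt_of_succ_lt h⟩ : Fin n) ≤ ⟨i+1, h⟩ := by simp [Fin.mk_le_mk]
    have h1 : w (σ ⟨i, Nat.lt_of_succ_lt h⟩) ≤ w (σ ⟨i+1, h⟩) := hmono hle
    refine ⟨h1, fun hiD => ?_⟩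
    rcases lt_or_eq_of_le h1 with h2 | h2
    · exact h2
    · exfalso
      have := htie ⟨i, Nat.lt_of_succ_lt h⟩ ⟨i+1, h⟩ (by simp [Fin.mk_lt_mk]) h2
      have hdes := (myMemDesSet σ i h).mp hiD
      exact absurd this (not_lt.mpr hdes.le)
  · intro hgap
    have hmono : Monotone (w ∘ σ) := by
      intro i j hij
      rcases eq_or_lt_of_le hij with rfl | hlt
      · exact le_rfl
      · have hlt' : (i : ℕ) ≤ (j : ℕ) := le_of_lt hlt
        have := myChainLe (fun k => w (σ k)) (j : ℕ) j.isLt (i : ℕ) hlt'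
          (fun k hk hk' h' => (hgap k h').1)
        simpa using this
    refine ⟨hmono, fun i j hij heq => ?_⟩
    have hchain : ∀ k, (i : ℕ) ≤ k → k + 1 ≤ (j : ℕ) → ∀ h : k + 1 < n,
        σ ⟨k, Nat.lt_of_succ_lt h⟩ < σ ⟨k+1, h⟩ := by
      intro k hk hk' h'
      -- w is constant on the block [i, j]
      have e1 : w (σ ⟨k, Nat.lt_of_succ_lt h'⟩) = w (σ ⟨k+1, h'⟩) := by
        have l1 : w (σ i) ≤ w (σ ⟨k, Nat.lt_of_succ_lt h'⟩) := by
          have : i ≤ (⟨k, Nat.lt_of_succ_lt h'⟩ : Fin n) := by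
            simpa [Fin.le_def] using hk
          exact hmono this
        have l2 : w (σ ⟨k, Nat.lt_of_succ_lt h'⟩) ≤ w (σ ⟨k+1, h'⟩) := (hgap k h').1
        have l3 : w (σ ⟨k+1, h'⟩) ≤ w (σ j) := by
          have : (⟨k+1, h'⟩ : Fin n) ≤ j := by simpa [Fin.le_def] using hk'
          exact hmono this
        rw [heq] at l1
        exact le_antisymm l2 (le_trans l3 l1)
      have hnotdes : k ∉ desSet n σ := by
        intro hkD
        exact absurd ((hgap k h').2 hkD) (by simp [e1])
      have hne : σ ⟨k, Nat.lt_of_succ_lt h'⟩ ≠ σ ⟨k+1, h'⟩ := by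
        intro hcon
        have := σ.injective hcon
        simp [Fin.mk.injEq] at this
      rcases lt_or_gt_of_ne hne with hl | hg
      · exact hl
      · exact absurd ((myMemDesSet σ k h').mpr hg) hnotdes
    have hij' : (i : ℕ) < (j : ℕ) := hij
    have := myChainLt (fun k => σ k) (j : ℕ) j.isLt (i : ℕ) hij' hchain
    simpa using this

lemma mySumChoose (n a : ℕ) (ha : 1 ≤ a) :
    ∑ σ : Equiv.Perm (Fin n), (n + a - 1 - des n σ).choose n = a ^ n := by
  classical
  have h0 : (Finset.univ : Finset (Fin n → Fin a)).card = a ^ n := by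
    simp [Finset.card_univ]
  have h1 := Finset.card_eq_sum_card_fiberwise
    (f := fun w : Fin n → Fin a => Tuple.sort w) (s := Finset.univ) (t := Finset.univ)
    (fun w _ => Finset.mem_univ _)
  rw [h0] at h1
  have h2 : ∀ σ : Equiv.Perm (Fin n),
      (Finset.univ.filter fun w : Fin n → Fin a => Tuple.sort w = σ).card
        = (n + a - 1 - des n σ).choose n := by
    intro σ
    have e : {w : Fin n → Fin a // Tuple.sort w = σ}
        ≃ {y : Fin n → Fin a // myGap n a (desSet n σ) y} :=
      { toFun := fun w => ⟨fun i => w.1 (σ i), (mySortIff σ w.1).mp w.2⟩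
        invFun := fun y => ⟨fun i => y.1 (σ.symm i), by
          apply (mySortIff σ _).mpr
          simp only [Equiv.symm_apply_apply]
          exact y.2⟩
        left_inv := fun w => by
          ext i
          simp
        right_inv := fun y => by
          ext i
          simp }
    rw [← Fintype.card_subtype, ← Nat.card_eq_fintype_card, Nat.card_congr e,
      myCardGap n a ha (desSet n σ) (Finset.filter_subset _ _)]
    rfl
  rw [Finset.sum_congr rfl (fun σ _ => h2 σ)] at h1
  exact h1.symm

/-- Every column of the `a`-handed riffle shuffle transition matrix sums to 1;
consequently the uniform distribution is stationary. -/
theorem stmt1 (n a : ℕ) (hn : 1 ≤ n) (ha : 1 ≤ a) (τ : Equiv.Perm (Fin n)) :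
    (∑ σ : Equiv.Perm (Fin n), Pa n a σ τ = 1) ∧
    (∑ σ : Equiv.Perm (Fin n), ((n.factorial : ℚ))⁻¹ * Pa n a σ τ =
      ((n.factorial : ℚ))⁻¹) := by
  have hsum : ∑ σ : Equiv.Perm (Fin n), Pa n a σ τ = 1 := by
    unfold Pa
    rw [← Finset.sum_div]
    have hre : ∑ σ : Equiv.Perm (Fin n), ((n + a - 1 - des n (τ⁻¹ * σ)).choose n : ℚ)
        = ∑ σ : Equiv.Perm (Fin n), ((n + a - 1 - des n σ).choose n : ℚ) := by
      refine (Fintype.sum_equiv (Equiv.mulLeft τ)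
        (fun π => ((n + a - 1 - des n π).choose n : ℚ)) _ (fun π => ?_)).symm
      simp [inv_mul_cancel_left]
    rw [hre]
    have hnat : ∑ σ : Equiv.Perm (Fin n), ((n + a - 1 - des n σ).choose n : ℚ)
        = ((a : ℚ)) ^ n := by
      rw [← Nat.cast_sum]
      rw [mySumChoose n a ha]
      push_cast
      ring
    rw [hnat]
    apply div_self
    positivity
  refine ⟨hsum, ?_⟩
  rw [← Finset.mul_sum, hsum, mul_one]
end

section
/- For all integers n ≥ 1 and a, b ≥ 1, the matrix product of the a-handed and b-handed riffle shuffle transition matrices on S_n equals the (ab)-handed riffle shuffle transition matrix: P_a · P_b = P_{ab}. In particular, performing the 2-handed GSR riffle shuffle t times in succession has the same transition matrix as a single 2^t-handed shuffle. -/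
open Finset

section Aux
variable {n : ℕ}

/-- `v` is a `π`-compatible word: nondecreasing, strictly increasing at descents of `π`. -/
def Compat (k : ℕ) (π : Equiv.Perm (Fin n)) (v : Fin n → Fin k) : Prop :=
  ∀ i : ℕ, ∀ h : i + 1 < n,
    v ⟨i, Nat.lt_of_succ_lt h⟩ ≤ v ⟨i + 1, h⟩ ∧
    (π ⟨i + 1, h⟩ < π ⟨i, Nat.lt_of_succ_lt h⟩ → v ⟨i, Nat.lt_of_succ_lt h⟩ < v ⟨i + 1, h⟩)

lemma mono_of_step {α : Type*} [Preorder α] {f : Fin n → α}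
    (h : ∀ i : ℕ, ∀ hi : i + 1 < n, f ⟨i, Nat.lt_of_succ_lt hi⟩ ≤ f ⟨i + 1, hi⟩) :
    Monotone f := by
  intro i j hij
  obtain ⟨d, hd⟩ : ∃ d, (j : ℕ) = (i : ℕ) + d := ⟨j - i, by omega⟩
  induction d generalizing j with
  | zero => have : i = j := Fin.ext (by omega); rw [this]
  | succ d ih =>
      have hdn : (i : ℕ) + d + 1 < n := hd ▸ j.isLt
      have h1 : f i ≤ f ⟨(i : ℕ) + d, Nat.lt_of_succ_lt hdn⟩ :=
        ih (j := ⟨(i : ℕ) + d, Nat.lt_of_succ_lt hdn⟩) (by simp [Fin.le_def]) rfl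
      have h2 := h ((i : ℕ) + d) hdn
      have h3 : (⟨(i : ℕ) + d + 1, hdn⟩ : Fin n) = j := Fin.ext (by simp; omega)
      exact h1.trans (h3 ▸ h2)

lemma Compat.mono {k : ℕ} {π : Equiv.Perm (Fin n)} {v : Fin n → Fin k}
    (hv : Compat k π v) : Monotone v :=
  mono_of_step (fun i hi => (hv i hi).1)

lemma Compat.pair {k : ℕ} {π : Equiv.Perm (Fin n)} {v : Fin n → Fin k}
    (hv : Compat k π v) {i j : Fin n} (hij : (j : ℕ) = (i : ℕ) + 1) :
    v i ≤ v j ∧ (π j < π i → v i < v j) := by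
  have hn : (i : ℕ) + 1 < n := by have := j.isLt; omega
  have h := hv (i : ℕ) hn
  have e1 : (⟨(i : ℕ), Nat.lt_of_succ_lt hn⟩ : Fin n) = i := Fin.ext rfl
  have e2 : (⟨(i : ℕ) + 1, hn⟩ : Fin n) = j := Fin.ext (by simp [hij])
  rwa [e1, e2] at h

lemma Compat.lt {k : ℕ} {π : Equiv.Perm (Fin n)} {v : Fin n → Fin k}
    (hv : Compat k π v) {i j : Fin n} (hij : i < j) (hu : π j < π i) : v i < v j := by
  obtain ⟨d, hd⟩ : ∃ d, (j : ℕ) = (i : ℕ) + d + 1 := ⟨(j : ℕ) - i - 1, by omega⟩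
  induction d generalizing i j with
  | zero => exact (hv.pair (by omega)).2 hu
  | succ d ih =>
      have hmn : (i : ℕ) + d + 1 < n := by have := j.isLt; omega
      set m : Fin n := ⟨(i : ℕ) + d + 1, hmn⟩ with hm
      by_cases hc : π j < π m
      · have h1 : v m < v j := (hv.pair (by simp [hm]; omega)).2 hc
        have h0 : v i ≤ v m := hv.mono (by simp [Fin.le_def, hm]; omega)
        exact lt_of_le_of_lt h0 h1
      · have h2 : π m < π i := lt_of_le_of_lt (not_lt.1 hc) hu
        have h3 : v i < v m := ih (by simp [Fin.lt_def, hm]) h2 (by simp [hm])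
        exact lt_of_lt_of_le h3 (hv.mono (by simp [Fin.le_def, hm]; omega))

end Aux

section Count
variable {n : ℕ}

lemma strictMono_of_step {α : Type*} [Preorder α] {f : Fin n → α}
    (h : ∀ i : ℕ, ∀ hi : i + 1 < n, f ⟨i, Nat.lt_of_succ_lt hi⟩ < f ⟨i + 1, hi⟩) :
    StrictMono f := by
  intro i j hij
  obtain ⟨d, hd⟩ : ∃ d, (j : ℕ) = (i : ℕ) + d + 1 := ⟨(j : ℕ) - i - 1, by omega⟩
  induction d generalizing j with
  | zero =>
      have hn : (i : ℕ) + 1 < n := by have := j.isLt; omega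
      have h1 := h (i : ℕ) hn
      have e1 : (⟨(i : ℕ), Nat.lt_of_succ_lt hn⟩ : Fin n) = i := Fin.ext rfl
      have e2 : (⟨(i : ℕ) + 1, hn⟩ : Fin n) = j := Fin.ext (by simp; omega)
      rwa [e1, e2] at h1
  | succ d ih =>
      have hmn : (i : ℕ) + d + 1 < n := by have := j.isLt; omega
      have h1 : f i < f ⟨(i : ℕ) + d + 1, hmn⟩ :=
        ih (j := ⟨(i : ℕ) + d + 1, hmn⟩) (by simp [Fin.lt_def]) rfl
      have h2 := h ((i : ℕ) + d + 1) (by omega)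
      have e2 : (⟨(i : ℕ) + d + 1 + 1, by omega⟩ : Fin n) = j := Fin.ext (by simp; omega)
      exact h1.trans (by rw [← e2]; exact h2)

/-- number of non-descents of `π` among `0, …, i-1`. -/
def asc (π : Equiv.Perm (Fin n)) (i : ℕ) : ℕ :=
  ((Finset.range i).filter (fun j => j ∉ desSet n π)).card

lemma asc_mono (π : Equiv.Perm (Fin n)) {i j : ℕ} (hij : i ≤ j) : asc π i ≤ asc π j :=
  Finset.card_le_card (Finset.filter_subset_filter _ (Finset.range_subset_range.2 hij))

lemma asc_le (π : Equiv.Perm (Fin n)) (i : ℕ) : asc π i ≤ i :=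
  le_trans (Finset.card_filter_le _ _) (le_of_eq (Finset.card_range i))

lemma asc_succ (π : Equiv.Perm (Fin n)) (i : ℕ) :
    asc π (i + 1) = asc π i + (if i ∈ desSet n π then 0 else 1) := by
  unfold asc
  rw [Finset.range_add_one, Finset.filter_insert]
  split_ifs with h1
  · simp
  · rw [Finset.card_insert_of_notMem
      (fun hc => lt_irrefl i (Finset.mem_range.1 (Finset.mem_filter.1 hc).1))]

lemma asc_gap (π : Equiv.Perm (Fin n)) {i j : ℕ} (hij : i ≤ j) :
    asc π j ≤ asc π i + (j - i) := by
  induction j with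
  | zero => simpa [Nat.le_zero.1 hij]
  | succ j ih =>
      rcases Nat.lt_or_ge i (j + 1) with h | h
      · have := ih (by omega)
        rw [asc_succ]
        split_ifs <;> omega
      · have : i = j + 1 := by omega
        simp [this]

lemma des_le (π : Equiv.Perm (Fin n)) : des n π ≤ n - 1 := by
  have := Finset.card_le_card (Finset.filter_subset
    (fun i => ∃ h : i + 1 < n, π ⟨i + 1, h⟩ < π ⟨i, Nat.lt_of_succ_lt h⟩) (Finset.range (n - 1)))
  simpa [des, desSet] using this

lemma asc_top (π : Equiv.Perm (Fin n)) : asc π (n - 1) = (n - 1) - des n π := by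
  have h1 := Finset.card_filter_add_card_filter_not
    (s := Finset.range (n - 1)) (p := fun j => j ∈ desSet n π)
  have hsub : desSet n π ⊆ Finset.range (n - 1) := Finset.filter_subset _ _
  have h2 : (Finset.range (n - 1)).filter (fun j => j ∈ desSet n π) = desSet n π := by
    rw [Finset.filter_mem_eq_inter, Finset.inter_eq_right.2 hsub]
  rw [h2, Finset.card_range] at h1
  unfold asc des
  omega

lemma mem_desSet {π : Equiv.Perm (Fin n)} {i : ℕ} (h : i + 1 < n) :
    i ∈ desSet n π ↔ π ⟨i + 1, h⟩ < π ⟨i, Nat.lt_of_succ_lt h⟩ := by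
  unfold desSet
  rw [Finset.mem_filter, Finset.mem_range]
  constructor
  · rintro ⟨-, h', hlt⟩
    exact hlt
  · intro hlt
    exact ⟨by omega, h, hlt⟩

lemma smono_gap {N : ℕ} {w : Fin n → Fin N} (hw : StrictMono w) {i j : Fin n}
    (hij : i ≤ j) : (w i : ℕ) + ((j : ℕ) - (i : ℕ)) ≤ (w j : ℕ) := by
  have hf : Monotone (fun i : Fin n => (w i : ℕ) + (n - 1 - (i : ℕ))) := by
    apply mono_of_step
    intro i hi
    have hlt := hw (show (⟨i, Nat.lt_of_succ_lt hi⟩ : Fin n) < ⟨i + 1, hi⟩ by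
      simp [Fin.lt_def])
    rw [Fin.lt_def] at hlt
    simp only
    omega
  have := hf hij
  simp only at this
  have h1 := j.isLt
  have h2 := i.isLt
  have h3 : (i : ℕ) ≤ (j : ℕ) := hij
  omega

lemma card_strictMono (m N : ℕ) :
    Nat.card {w : Fin m → Fin N // StrictMono w} = N.choose m := by
  have e : {w : Fin m → Fin N // StrictMono w} ≃ {s : Finset (Fin N) // s.card = m} :=
    { toFun := fun w => ⟨Finset.univ.map ⟨w.1, w.2.injective⟩, by
        rw [Finset.card_map, Finset.card_univ, Fintype.card_fin]⟩
      invFun := fun s => ⟨s.1.orderEmbOfFin s.2, (s.1.orderEmbOfFin s.2).strictMono⟩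
      left_inv := fun w => by
        apply Subtype.ext
        exact (Finset.orderEmbOfFin_unique _
          (fun x => Finset.mem_map.2 ⟨x, Finset.mem_univ x, rfl⟩) w.2).symm
      right_inv := fun s => by
        apply Subtype.ext
        ext x
        simp only [Finset.mem_map, Finset.mem_univ, true_and, Function.Embedding.coeFn_mk]
        constructor
        · rintro ⟨i, rfl⟩; exact Finset.orderEmbOfFin_mem _ _ _
        · intro hx
          have hx' : x ∈ Set.range (s.1.orderEmbOfFin s.2) := by
            rw [Finset.range_orderEmbOfFin]; exact hx
          exact hx' }
  rw [Nat.card_congr e, Nat.card_eq_fintype_card, Fintype.card_finset_len, Fintype.card_fin]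

lemma card_compat (k : ℕ) (hn : 1 ≤ n) (π : Equiv.Perm (Fin n)) :
    Nat.card {v : Fin n → Fin k // Compat k π v} = (n + k - 1 - des n π).choose n := by
  have hdes : des n π ≤ n - 1 := des_le π
  have hNn : n + k - 1 - des n π = k + (n - 1 - des n π) := by omega
  rw [hNn, ← card_strictMono n (k + (n - 1 - des n π))]
  apply Nat.card_congr
  set N := k + (n - 1 - des n π) with hN
  have hb : ∀ (v : Fin n → Fin k), ∀ i : Fin n, (v i : ℕ) + asc π (i : ℕ) < N := by
    intro v i
    have h1 : (v i : ℕ) < k := (v i).isLt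
    have h2 : asc π (i : ℕ) ≤ asc π (n - 1) := asc_mono π (by have := i.isLt; omega)
    rw [asc_top π] at h2
    omega
  refine
    { toFun := fun v => ⟨fun i => ⟨(v.1 i : ℕ) + asc π (i : ℕ), hb v.1 i⟩, ?_⟩
      invFun := fun w => ⟨fun i => ⟨(w.1 i : ℕ) - asc π (i : ℕ), ?_⟩, ?_⟩
      left_inv := ?_
      right_inv := ?_ }
  · -- strict mono
    apply strictMono_of_step
    intro i hi
    obtain ⟨v, hv⟩ := v
    have hp := hv i hi
    have hd := asc_succ π i
    rw [Fin.lt_def]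
    simp only
    by_cases hD : i ∈ desSet n π
    · have := hp.2 ((mem_desSet hi).1 hD)
      rw [Fin.lt_def] at this
      simp [hD] at hd
      omega
    · have := hp.1
      rw [Fin.le_def] at this
      simp [hD] at hd
      omega
  · -- bound for invFun value
    have hlast : (n - 1 : ℕ) < n := by have := i.isLt; omega
    have hgap : (w.1 i : ℕ) + ((n - 1) - (i : ℕ)) ≤ (w.1 ⟨n - 1, hlast⟩ : ℕ) :=
      smono_gap w.2 (show i ≤ (⟨n - 1, hlast⟩ : Fin n) by
        rw [Fin.le_def]; simp; have := i.isLt; omega)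
    have hag := asc_gap π (show (i : ℕ) ≤ n - 1 by have := i.isLt; omega)
    have htop := asc_top π
    have h1 : ((w.1 ⟨n - 1, hlast⟩ : ℕ)) < N := (w.1 _).isLt
    have h0 : (0 : ℕ) < n := by omega
    have hge0 : (w.1 ⟨0, h0⟩ : ℕ) + ((n - 1) - 0) ≤ (w.1 ⟨n - 1, hlast⟩ : ℕ) :=
      smono_gap w.2 (Fin.mk_le_mk.mpr (by omega))
    have hf : asc π (n - 1) ≤ n - 1 := asc_le π _
    have := i.isLt
    omega
  · -- Compat for invFun
    obtain ⟨w, hw⟩ := w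
    intro i hi
    have hstep := hw (show (⟨i, Nat.lt_of_succ_lt hi⟩ : Fin n) < ⟨i + 1, hi⟩ by
      simp [Fin.lt_def])
    rw [Fin.lt_def] at hstep
    have hd := asc_succ π i
    have hai : asc π i ≤ i := asc_le π i
    have hge : i ≤ (w ⟨i, Nat.lt_of_succ_lt hi⟩ : ℕ) := by
      have h0 : (0 : ℕ) < n := by omega
      have h2 : (w ⟨0, h0⟩ : ℕ) + (i - 0) ≤ (w ⟨i, Nat.lt_of_succ_lt hi⟩ : ℕ) :=
        smono_gap hw (Fin.mk_le_mk.mpr (by omega))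
      omega
    constructor
    · rw [Fin.le_def]
      simp only
      by_cases hD : i ∈ desSet n π
      · simp [hD] at hd; omega
      · simp [hD] at hd; omega
    · intro hdesc
      have hD : i ∈ desSet n π := (mem_desSet hi).2 hdesc
      rw [Fin.lt_def]
      simp only
      simp [hD] at hd
      omega
  · -- left_inv
    intro v
    apply Subtype.ext
    funext i
    apply Fin.ext
    simp
  · -- right_inv
    intro w
    apply Subtype.ext
    funext i
    apply Fin.ext
    simp only
    have hge : (i : ℕ) ≤ (w.1 i : ℕ) := by
      have h0 : (0 : ℕ) < n := by have := i.isLt; omega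
      have := smono_gap w.2 (show (⟨0, h0⟩ : Fin n) ≤ i by rw [Fin.le_def]; simp)
      simp only at this
      omega
    have hai : asc π i ≤ i := asc_le π i
    omega

end Count

theorem Equiv.Perm.apply_inv_self {α : Type*} (f : Equiv.Perm α) (x : α) : f (f⁻¹ x) = x :=
  f.apply_symm_apply x

theorem Equiv.Perm.inv_apply_self {α : Type*} (f : Equiv.Perm α) (x : α) : f⁻¹ (f x) = x :=
  f.symm_apply_apply x

section Key
variable {n : ℕ}

open Equiv

lemma phi_bound {a b : ℕ} (t : Fin n → Fin a) (s : Fin n → Fin b) (i j : Fin n) :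
    b * (t i : ℕ) + (s j : ℕ) < a * b := by
  have h1 : (t i : ℕ) + 1 ≤ a := (t i).isLt
  have h2 : (s j : ℕ) < b := (s j).isLt
  calc b * (t i : ℕ) + (s j : ℕ) < b * ((t i : ℕ) + 1) := by
        rw [Nat.mul_add, Nat.mul_one]; omega
    _ ≤ b * a := Nat.mul_le_mul_left b h1
    _ = a * b := Nat.mul_comm b a

/-- the combined `ab`-word of a pair of shuffles -/
def phi {a b : ℕ} (π u : Equiv.Perm (Fin n)) (t : Fin n → Fin a) (s : Fin n → Fin b) :
    Fin n → Fin (a * b) :=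
  fun i => ⟨b * (t i : ℕ) + (s (u⁻¹ (π i)) : ℕ), phi_bound t s i _⟩

lemma phi_compat {a b : ℕ} {π u : Equiv.Perm (Fin n)} {t : Fin n → Fin a} {s : Fin n → Fin b}
    (ht : Compat a (u⁻¹ * π) t) (hs : Compat b u s) : Compat (a * b) π (phi π u t s) := by
  intro i hi
  set i0 : Fin n := ⟨i, Nat.lt_of_succ_lt hi⟩ with hi0
  set i1 : Fin n := ⟨i + 1, hi⟩ with hi1
  have hp := ht i hi
  rw [← hi0, ← hi1] at hp
  have hmul : ∀ x : Fin n, (u⁻¹ * π) x = u⁻¹ (π x) := fun x => rfl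
  have hub : ∀ j : Fin n, (s j : ℕ) < b := fun j => (s j).isLt
  rcases lt_or_eq_of_le hp.1 with hA | hA
  · -- t strictly increases: both conclusions strict
    have hA' : (t i0 : ℕ) + 1 ≤ (t i1 : ℕ) := hA
    have hm : b * ((t i0 : ℕ) + 1) ≤ b * (t i1 : ℕ) := Nat.mul_le_mul_left b hA'
    rw [Nat.mul_add, Nat.mul_one] at hm
    have hs0 := hub (u⁻¹ (π i0))
    constructor
    · show phi π u t s i0 ≤ phi π u t s i1
      rw [Fin.le_def]
      show b * (t i0 : ℕ) + (s (u⁻¹ (π i0)) : ℕ) ≤ b * (t i1 : ℕ) + (s (u⁻¹ (π i1)) : ℕ)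
      omega
    · intro _
      show phi π u t s i0 < phi π u t s i1
      rw [Fin.lt_def]
      show b * (t i0 : ℕ) + (s (u⁻¹ (π i0)) : ℕ) < b * (t i1 : ℕ) + (s (u⁻¹ (π i1)) : ℕ)
      omega
  · -- t equal
    have hAeq : (t i0 : ℕ) = (t i1 : ℕ) := congrArg Fin.val hA
    have hne : (u⁻¹ * π) i0 ≠ (u⁻¹ * π) i1 := by
      intro hc
      have : i0 = i1 := (u⁻¹ * π).injective hc
      rw [Fin.ext_iff] at this
      simp [hi0, hi1] at this
    have hnlt : ¬ (u⁻¹ * π) i1 < (u⁻¹ * π) i0 := by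
      intro hc
      have := hp.2 hc
      rw [Fin.lt_def] at this
      omega
    have hjj : (u⁻¹ * π) i0 < (u⁻¹ * π) i1 := lt_of_le_of_ne (not_lt.1 hnlt) hne
    have hjj' : u⁻¹ (π i0) < u⁻¹ (π i1) := hjj
    constructor
    · show phi π u t s i0 ≤ phi π u t s i1
      rw [Fin.le_def]
      show b * (t i0 : ℕ) + (s (u⁻¹ (π i0)) : ℕ) ≤ b * (t i1 : ℕ) + (s (u⁻¹ (π i1)) : ℕ)
      rw [hAeq]
      have := hs.mono hjj'.le
      rw [Fin.le_def] at this
      omega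
    · intro hdesc
      show phi π u t s i0 < phi π u t s i1
      rw [Fin.lt_def]
      show b * (t i0 : ℕ) + (s (u⁻¹ (π i0)) : ℕ) < b * (t i1 : ℕ) + (s (u⁻¹ (π i1)) : ℕ)
      rw [hAeq]
      have hdesc' : u (u⁻¹ (π i1)) < u (u⁻¹ (π i0)) := by
        rw [Equiv.Perm.apply_inv_self, Equiv.Perm.apply_inv_self]
        exact hdesc
      have := hs.lt hjj' hdesc'
      rw [Fin.lt_def] at this
      omega

lemma sort_eq {b : ℕ} {u : Equiv.Perm (Fin n)} {s : Fin n → Fin b}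
    (hs : Compat b u s) {y : Fin n → ℕ} (hy : ∀ c, y c = (s (u⁻¹ c) : ℕ)) :
    Tuple.sort y = u := by
  symm
  rw [Tuple.eq_sort_iff]
  constructor
  · intro j j' hjj
    show y (u j) ≤ y (u j')
    rw [hy, hy, Equiv.Perm.inv_apply_self, Equiv.Perm.inv_apply_self]
    exact hs.mono hjj
  · intro j j' hjj heq
    rw [hy, hy, Equiv.Perm.inv_apply_self, Equiv.Perm.inv_apply_self] at heq
    by_contra hc
    have hne : u j ≠ u j' := fun hc' => absurd (u.injective hc') (ne_of_lt hjj)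
    have hlt : u j' < u j := lt_of_le_of_ne (not_lt.1 hc) (Ne.symm hne)
    have := hs.lt hjj hlt
    rw [Fin.lt_def] at this
    omega

lemma phi_inj {a b : ℕ} (hb : 1 ≤ b) {π u u' : Equiv.Perm (Fin n)}
    {t t' : Fin n → Fin a} {s s' : Fin n → Fin b}
    (ht : Compat a (u⁻¹ * π) t) (hs : Compat b u s)
    (ht' : Compat a (u'⁻¹ * π) t') (hs' : Compat b u' s')
    (h : phi π u t s = phi π u' t' s') : u = u' ∧ t = t' ∧ s = s' := by
  have hb0 : 0 < b := hb
  have hV : ∀ i, b * (t i : ℕ) + (s (u⁻¹ (π i)) : ℕ)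
      = b * (t' i : ℕ) + (s' (u'⁻¹ (π i)) : ℕ) :=
    fun i => congrArg Fin.val (congrFun h i)
  set y : Fin n → ℕ :=
    fun c => (b * (t (π⁻¹ c) : ℕ) + (s (u⁻¹ (π (π⁻¹ c))) : ℕ)) % b with hy
  have hy1 : ∀ c, y c = (s (u⁻¹ c) : ℕ) := by
    intro c
    simp only [hy, Equiv.Perm.apply_inv_self, Nat.mul_add_mod]
    exact Nat.mod_eq_of_lt (s (u⁻¹ c)).isLt
  have hy2 : ∀ c, y c = (s' (u'⁻¹ c) : ℕ) := by
    intro c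
    simp only [hy]
    rw [hV (π⁻¹ c)]
    simp only [Equiv.Perm.apply_inv_self, Nat.mul_add_mod]
    exact Nat.mod_eq_of_lt (s' (u'⁻¹ c)).isLt
  have huu : u = u' := by rw [← sort_eq hs hy1, ← sort_eq hs' hy2]
  subst huu
  have htt : t = t' := by
    funext i
    apply Fin.ext
    have h1 := hV i
    have h2 : (s (u⁻¹ (π i)) : ℕ) < b := (s _).isLt
    have h3 : (s' (u⁻¹ (π i)) : ℕ) < b := (s' _).isLt
    have h4 := congrArg (fun z => z / b) h1
    simp only [Nat.mul_add_div hb0, Nat.div_eq_of_lt h2, Nat.div_eq_of_lt h3, add_zero] at h4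
    exact h4
  have hss : s = s' := by
    funext j
    have h1 := hV (π⁻¹ (u j))
    rw [htt] at h1
    simp only [Equiv.Perm.apply_inv_self, Equiv.Perm.inv_apply_self] at h1
    apply Fin.ext
    omega
  exact ⟨rfl, htt, hss⟩

lemma phi_surj_aux {a b : ℕ} (hb : 1 ≤ b) (π : Equiv.Perm (Fin n))
    (V : Fin n → Fin (a * b)) (hVc : Compat (a * b) π V) :
    ∃ (u : Equiv.Perm (Fin n)) (t : Fin n → Fin a) (s : Fin n → Fin b),
      Compat a (u⁻¹ * π) t ∧ Compat b u s ∧ phi π u t s = V := by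
  have hb0 : 0 < b := hb
  set y : Fin n → ℕ := fun c => (V (π⁻¹ c) : ℕ) % b with hy
  set u : Equiv.Perm (Fin n) := Tuple.sort y with hu
  obtain ⟨hmon, hstab⟩ := Tuple.eq_sort_iff.1 hu
  have hyub : ∀ c, y c < b := fun c => Nat.mod_lt _ hb0
  have htub : ∀ i : Fin n, (V i : ℕ) / b < a := by
    intro i
    rw [Nat.div_lt_iff_lt_mul hb0]
    exact (V i).isLt
  have hyπ : ∀ i : Fin n, y (π i) = (V i : ℕ) % b := by
    intro i
    simp only [hy, Equiv.Perm.inv_apply_self]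
  refine ⟨u, fun i => ⟨(V i : ℕ) / b, htub i⟩, fun j => ⟨y (u j), hyub _⟩, ?_, ?_, ?_⟩
  · -- Compat a (u⁻¹ * π) t
    intro i hi
    set i0 : Fin n := ⟨i, Nat.lt_of_succ_lt hi⟩ with hi0
    set i1 : Fin n := ⟨i + 1, hi⟩ with hi1
    have hpair := hVc.pair (i := i0) (j := i1) (by simp [hi0, hi1])
    have hle : (V i0 : ℕ) ≤ (V i1 : ℕ) := hpair.1
    constructor
    · exact Fin.mk_le_mk.mpr (Nat.div_le_div_right hle)
    · intro hdesc
      refine Fin.mk_lt_mk.mpr ?_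
      by_contra hc
      have hteq : (V i0 : ℕ) / b = (V i1 : ℕ) / b :=
        le_antisymm (Nat.div_le_div_right hle) (not_lt.1 hc)
      have hdm0 := Nat.div_add_mod (V i0 : ℕ) b
      have hdm1 := Nat.div_add_mod (V i1 : ℕ) b
      have hprod : b * ((V i0 : ℕ) / b) = b * ((V i1 : ℕ) / b) := by rw [hteq]
      have hr : (V i0 : ℕ) % b ≤ (V i1 : ℕ) % b := by omega
      have hjj : u⁻¹ (π i1) < u⁻¹ (π i0) := hdesc
      have hm1 : y (u (u⁻¹ (π i1))) ≤ y (u (u⁻¹ (π i0))) := hmon hjj.le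
      rw [Equiv.Perm.apply_inv_self, Equiv.Perm.apply_inv_self, hyπ, hyπ] at hm1
      have hystab : y (u (u⁻¹ (π i1))) = y (u (u⁻¹ (π i0))) := by
        rw [Equiv.Perm.apply_inv_self, Equiv.Perm.apply_inv_self, hyπ, hyπ]
        omega
      have hult := hstab _ _ hjj hystab
      rw [Equiv.Perm.apply_inv_self, Equiv.Perm.apply_inv_self] at hult
      have hstrict := hpair.2 hult
      rw [Fin.lt_def] at hstrict
      omega
  · -- Compat b u s
    intro i hi
    set i0 : Fin n := ⟨i, Nat.lt_of_succ_lt hi⟩ with hi0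
    set i1 : Fin n := ⟨i + 1, hi⟩ with hi1
    have hii : i0 < i1 := Fin.mk_lt_mk.mpr (by omega)
    constructor
    · exact Fin.mk_le_mk.mpr (hmon hii.le)
    · intro hdesc
      refine Fin.mk_lt_mk.mpr ?_
      rcases eq_or_lt_of_le (hmon hii.le) with he | hl
      · exact absurd (hstab i0 i1 hii he) (not_lt.2 hdesc.le)
      · exact hl
  · -- phi equals V
    funext i
    apply Fin.ext
    show b * ((V i : ℕ) / b) + y (u (u⁻¹ (π i))) = (V i : ℕ)
    rw [Equiv.Perm.apply_inv_self, hyπ]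
    exact Nat.div_add_mod _ b

lemma nat_card_sigma {ι : Type*} [Fintype ι] (α : ι → Type*) [∀ i, Finite (α i)] :
    Nat.card (Sigma α) = ∑ i, Nat.card (α i) := by
  classical
  letI : ∀ i, Fintype (α i) := fun i => Fintype.ofFinite (α i)
  simp only [Nat.card_eq_fintype_card, Fintype.card_sigma]

lemma key (a b : ℕ) (hn : 1 ≤ n) (hb : 1 ≤ b) (π : Equiv.Perm (Fin n)) :
    ∑ u : Equiv.Perm (Fin n),
      (n + a - 1 - des n (u⁻¹ * π)).choose n * (n + b - 1 - des n u).choose n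
      = (n + a * b - 1 - des n π).choose n := by
  have hstep : ∀ u : Equiv.Perm (Fin n),
      (n + a - 1 - des n (u⁻¹ * π)).choose n * (n + b - 1 - des n u).choose n
      = Nat.card ({t : Fin n → Fin a // Compat a (u⁻¹ * π) t} ×
          {s : Fin n → Fin b // Compat b u s}) := by
    intro u
    rw [Nat.card_prod, card_compat a hn, card_compat b hn]
  rw [Finset.sum_congr rfl (fun u _ => hstep u), ← nat_card_sigma, ← card_compat (a * b) hn π]
  apply Nat.card_eq_of_bijective
    (f := fun x : Σ u : Equiv.Perm (Fin n), {t : Fin n → Fin a // Compat a (u⁻¹ * π) t} ×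
        {s : Fin n → Fin b // Compat b u s} =>
      (⟨phi π x.1 x.2.1.1 x.2.2.1, phi_compat x.2.1.2 x.2.2.2⟩ :
        {v : Fin n → Fin (a * b) // Compat (a * b) π v}))
  constructor
  · rintro ⟨u, ⟨t, ht⟩, ⟨s, hs⟩⟩ ⟨u', ⟨t', ht'⟩, ⟨s', hs'⟩⟩ hEq
    simp only [Subtype.mk.injEq] at hEq
    obtain ⟨h1, h2, h3⟩ := phi_inj hb ht hs ht' hs' hEq
    subst h1; subst h2; subst h3
    rfl
  · rintro ⟨V, hVc⟩
    obtain ⟨u, t, s, ht, hs, hphi⟩ := phi_surj_aux hb π V hVc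
    exact ⟨⟨u, ⟨t, ht⟩, ⟨s, hs⟩⟩, Subtype.ext hphi⟩

end Key

/-- Composition: an `a`-shuffle followed by a `b`-shuffle is an `ab`-shuffle. -/
theorem stmt2 (n a b : ℕ) (hn : 1 ≤ n) (ha : 1 ≤ a) (hb : 1 ≤ b) :
    Pa n a * Pa n b = Pa n (a * b) := by
  have key' := key (n := n) a b hn hb
  ext σ τ
  rw [Matrix.mul_apply]
  have hre : ∑ ρ : Equiv.Perm (Fin n), Pa n a σ ρ * Pa n b ρ τ
      = ∑ u : Equiv.Perm (Fin n), Pa n a σ (τ * u) * Pa n b (τ * u) τ :=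
    (Equiv.sum_comp (Equiv.mulLeft τ) (fun ρ => Pa n a σ ρ * Pa n b ρ τ)).symm
  rw [hre]
  unfold Pa
  have e1 : ∀ u : Equiv.Perm (Fin n), (τ * u)⁻¹ * σ = u⁻¹ * (τ⁻¹ * σ) := by
    intro u; rw [mul_inv_rev, mul_assoc]
  have e2 : ∀ u : Equiv.Perm (Fin n), τ⁻¹ * (τ * u) = u := fun u => inv_mul_cancel_left τ u
  simp only [e1, e2, div_mul_div_comm]
  rw [← Finset.sum_div]
  have hnum : ∑ u : Equiv.Perm (Fin n),
      ((n + a - 1 - des n (u⁻¹ * (τ⁻¹ * σ))).choose n : ℚ)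
        * ((n + b - 1 - des n u).choose n : ℚ)
      = ((n + a * b - 1 - des n (τ⁻¹ * σ)).choose n : ℚ) := by
    push_cast [← key' (τ⁻¹ * σ)]
    rfl
  rw [hnum]
  have hab : ((a * b : ℕ) : ℚ) ^ n = (a : ℚ) ^ n * (b : ℚ) ^ n := by
    push_cast
    rw [mul_pow]
  rw [hab]
end

section
/- The descent set is a Markov statistic for the a-handed riffle shuffle: for all integers n ≥ 1 and a ≥ 1, for all σ, σ' ∈ S_n with Des(σ) = Des(σ'), and for every subset S ⊆ {1,…,n−1}, one has Σ_{τ ∈ S_n : Des(τ) = S} P_a(σ,τ) = Σ_{τ ∈ S_n : Des(τ) = S} P_a(σ',τ). That is, the probability that an a-shuffle produces descents at a prescribed set of positions depends only on the descent set of the starting deck, not on the exact deck order. -/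
open Finset

namespace Stmt9

lemma desSet_subset (n : ℕ) (σ : Equiv.Perm (Fin n)) : desSet n σ ⊆ Finset.range (n-1) :=
  Finset.filter_subset _ _

lemma mem_desSet {n : ℕ} (σ : Equiv.Perm (Fin n)) {i j : Fin n} (hij : (i:ℕ)+1 = (j:ℕ)) :
    (i:ℕ) ∈ desSet n σ ↔ σ j < σ i := by
  unfold desSet
  rw [Finset.mem_filter, Finset.mem_range]
  constructor
  · rintro ⟨h1, h2, h3⟩
    have e1 : (⟨(i:ℕ)+1, h2⟩ : Fin n) = j := Fin.ext hij
    have e2 : (⟨(i:ℕ), Nat.lt_of_succ_lt h2⟩ : Fin n) = i := Fin.ext rfl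
    rwa [e1, e2] at h3
  · intro hlt
    have hj := j.isLt
    have h2 : (i:ℕ) + 1 < n := by omega
    refine ⟨by omega, h2, ?_⟩
    have e1 : (⟨(i:ℕ)+1, h2⟩ : Fin n) = j := Fin.ext hij
    have e2 : (⟨(i:ℕ), Nat.lt_of_succ_lt h2⟩ : Fin n) = i := Fin.ext rfl
    rwa [e1, e2]

def AdjCond (n : ℕ) (D : Finset ℕ) {a : ℕ} (y : Fin n → Fin a) : Prop :=
  ∀ i j : Fin n, (i:ℕ)+1 = (j:ℕ) → y i ≤ y j ∧ ((i:ℕ) ∈ D → y i < y j)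

instance {n a : ℕ} (D : Finset ℕ) : DecidablePred (fun y : Fin n → Fin a => AdjCond n D y) :=
  fun _ => by unfold AdjCond; infer_instance

instance {n M : ℕ} : DecidablePred (fun z : Fin n → Fin M => StrictMono z) :=
  fun z => decidable_of_iff (∀ a b : Fin n, a < b → z a < z b) Iff.rfl

/-- Equivalence between strictly monotone functions and subsets of given size. -/
def strictMonoEquiv (n M : ℕ) :
    {z : Fin n → Fin M // StrictMono z} ≃ {s : Finset (Fin M) // s.card = n} where
  toFun z := ⟨Finset.univ.image z.1, by
    rw [Finset.card_image_of_injective _ z.2.injective, Finset.card_univ, Fintype.card_fin]⟩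
  invFun s := ⟨fun i => s.1.orderEmbOfFin s.2 i, (s.1.orderEmbOfFin s.2).strictMono⟩
  left_inv z := by
    apply Subtype.ext
    exact (Finset.orderEmbOfFin_unique _ (fun x => Finset.mem_image_of_mem _ (mem_univ x)) z.2).symm
  right_inv s := by
    apply Subtype.ext
    apply Finset.eq_of_subset_of_card_le
    · intro x hx
      rcases Finset.mem_image.1 hx with ⟨i, -, rfl⟩
      exact Finset.orderEmbOfFin_mem _ _ _
    · rw [Finset.card_image_of_injective _ (s.1.orderEmbOfFin s.2).injective, Finset.card_univ,
        Fintype.card_fin, s.2]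

lemma card_strictMono (n M : ℕ) :
    (Finset.univ.filter (fun z : Fin n → Fin M => StrictMono z)).card = M.choose n := by
  rw [← Fintype.card_subtype]
  rw [Fintype.card_congr (strictMonoEquiv n M)]
  rw [Fintype.card_finset_len, Fintype.card_fin]


-- scratch: c function lemmas
def cD (D : Finset ℕ) (i : ℕ) : ℕ := ((Finset.range i).filter (fun t => t ∉ D)).card

def eD (D : Finset ℕ) (i : ℕ) : ℕ := ((Finset.range i).filter (fun t => t ∈ D)).card

lemma c_add_e (D : Finset ℕ) (i : ℕ) : cD D i + eD D i = i := by
  unfold cD eD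
  rw [add_comm]
  rw [Finset.card_filter_add_card_filter_not]
  exact Finset.card_range i

lemma e_le (D : Finset ℕ) (i : ℕ) : eD D i ≤ D.card := by
  unfold eD
  apply Finset.card_le_card
  intro t ht
  exact (Finset.mem_filter.1 ht).2

lemma e_ge {D : Finset ℕ} {n : ℕ} (hD : D ⊆ Finset.range (n-1)) (i : ℕ) :
    D.card ≤ eD D i + ((n-1) - i) := by
  have h1 : D.filter (fun t => ¬ t < i) ⊆ Finset.Ico i (n-1) := by
    intro t ht
    rw [Finset.mem_filter] at ht
    have := Finset.mem_range.1 (hD ht.1)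
    rw [Finset.mem_Ico]
    omega
  have h2 := Finset.card_le_card h1
  rw [Nat.card_Ico] at h2
  have h3 : (D.filter (fun t => t < i)).card + (D.filter (fun t => ¬ t < i)).card = D.card :=
    Finset.card_filter_add_card_filter_not (fun t => t < i)
  have h4 : eD D i = (D.filter (fun t => t < i)).card := by
    unfold eD
    congr 1
    ext t
    simp only [Finset.mem_filter, Finset.mem_range]
    tauto
  omega

lemma c_le {D : Finset ℕ} {n : ℕ} (hD : D ⊆ Finset.range (n-1)) {i : ℕ} (hi : i ≤ n-1) :
    cD D i ≤ (n-1) - D.card := by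
  have h1 := c_add_e D i
  have h2 := e_le D i
  have h3 := e_ge hD i
  omega

lemma c_step (D : Finset ℕ) (i : ℕ) :
    cD D (i+1) = cD D i + (if i ∈ D then 0 else 1) := by
  unfold cD
  rw [Finset.range_add_one, Finset.filter_insert]
  by_cases h : i ∈ D
  · simp [h]
  · rw [if_pos h, Finset.card_insert_of_notMem (by simp), if_neg h]


lemma strictMono_of_adj {n M : ℕ} {f : Fin n → Fin M}
    (h : ∀ i j : Fin n, (i:ℕ)+1 = (j:ℕ) → f i < f j) : StrictMono f := by
  have key : ∀ d : ℕ, ∀ p q : Fin n, (q:ℕ) = (p:ℕ) + d + 1 → f p < f q := by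
    intro d
    induction d with
    | zero => intro p q h1; exact h p q (by omega)
    | succ d ih =>
      intro p q h1
      have hm : (p:ℕ) + d + 1 < n := by have := q.isLt; omega
      exact (ih p ⟨(p:ℕ)+d+1, hm⟩ rfl).trans (h ⟨(p:ℕ)+d+1, hm⟩ q (by simp; omega))
  intro p q hpq
  have hv := Fin.lt_def.1 hpq
  exact key ((q:ℕ) - (p:ℕ) - 1) p q (by omega)

lemma sm_le_apply {n M : ℕ} {z : Fin n → Fin M} (hz : StrictMono z) (p : Fin n) :
    (p:ℕ) ≤ (z p : ℕ) := by
  have key : ∀ k : ℕ, ∀ p : Fin n, (p:ℕ) = k → k ≤ (z p : ℕ) := by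
    intro k
    induction k with
    | zero => intro p _; omega
    | succ k ih =>
      intro p hp
      have hk : k < n := by have := p.isLt; omega
      have h1 := ih ⟨k, hk⟩ rfl
      have h2 : z ⟨k, hk⟩ < z p := hz (by rw [Fin.lt_def]; simp; omega)
      rw [Fin.lt_def] at h2; omega
  exact key _ p rfl

lemma sm_upper {n M : ℕ} {z : Fin n → Fin M} (hz : StrictMono z) (p : Fin n) :
    (z p : ℕ) + ((n-1) - (p:ℕ)) ≤ M - 1 := by
  have key : ∀ k : ℕ, ∀ p : Fin n, (p:ℕ) + k = n - 1 → (z p : ℕ) + k ≤ M - 1 := by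
    intro k
    induction k with
    | zero => intro p _; have := (z p).isLt; omega
    | succ k ih =>
      intro p hp
      have hq : (p:ℕ)+1 < n := by have := p.isLt; omega
      have h1 := ih ⟨(p:ℕ)+1, hq⟩ (by simp; omega)
      have h2 : z p < z ⟨(p:ℕ)+1, hq⟩ := hz (by rw [Fin.lt_def]; simp)
      rw [Fin.lt_def] at h2; omega
  have hp : (p:ℕ) ≤ n-1 := by have := p.isLt; omega
  exact key ((n-1) - (p:ℕ)) p (by omega)

lemma lemma1 {n a : ℕ} (ha : 1 ≤ a) (hn : 1 ≤ n) {D : Finset ℕ}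
    (hD : D ⊆ Finset.range (n-1)) :
    (Finset.univ.filter (fun y : Fin n → Fin a => AdjCond n D y)).card
      = (n + a - 1 - D.card).choose n := by
  have hDc : D.card ≤ n - 1 := by
    have := Finset.card_le_card hD; rwa [Finset.card_range] at this
  set M := a + ((n-1) - D.card) with hMdef
  have hM : n + a - 1 - D.card = M := by omega
  rw [hM, ← card_strictMono n M]
  have hcp : ∀ p : Fin n, cD D (p:ℕ) ≤ (n-1) - D.card := fun p =>
    c_le hD (by have := p.isLt; omega)
  refine Finset.card_nbij'
    (i := fun y p => (⟨(y p : ℕ) + cD D (p:ℕ), by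
        have h1 := (y p).isLt; have h2 := hcp p; omega⟩ : Fin M))
    (j := fun z p => (⟨min ((z p : ℕ) - cD D (p:ℕ)) (a-1), by omega⟩ : Fin a))
    ?_ ?_ ?_ ?_
  · intro y hy
    rw [Finset.mem_coe, Finset.mem_filter] at hy ⊢
    refine ⟨Finset.mem_univ _, ?_⟩
    apply strictMono_of_adj
    intro i j hij
    obtain ⟨h1, h2⟩ := hy.2 i j hij
    simp only [Fin.mk_lt_mk]
    have hstep : cD D (j:ℕ) = cD D (i:ℕ) + (if (i:ℕ) ∈ D then 0 else 1) := by
      rw [← hij]; exact c_step D (i:ℕ)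
    by_cases hiD : (i:ℕ) ∈ D
    · have := Fin.lt_def.1 (h2 hiD); rw [hstep, if_pos hiD]; omega
    · have := Fin.le_def.1 h1; rw [hstep, if_neg hiD]; omega
  · intro z hz
    rw [Finset.mem_coe, Finset.mem_filter] at hz ⊢
    refine ⟨Finset.mem_univ _, ?_⟩
    have hlow : ∀ p : Fin n, cD D (p:ℕ) ≤ (z p : ℕ) := by
      intro p
      calc cD D (p:ℕ) ≤ (p:ℕ) := by have := c_add_e D (p:ℕ); omega
        _ ≤ (z p : ℕ) := sm_le_apply hz.2 p
    have hup : ∀ p : Fin n, (z p : ℕ) ≤ a - 1 + cD D (p:ℕ) := by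
      intro p
      have h1 := sm_upper hz.2 p
      have h2 := c_add_e D (p:ℕ)
      have h3 := e_le D (p:ℕ)
      have h4 := e_ge hD (p:ℕ)
      have h5 : (p:ℕ) ≤ n-1 := by have := p.isLt; omega
      omega
    intro i j hij
    have hstep : cD D (j:ℕ) = cD D (i:ℕ) + (if (i:ℕ) ∈ D then 0 else 1) := by
      rw [← hij]; exact c_step D (i:ℕ)
    have hlt : (z i : ℕ) < (z j : ℕ) := Fin.lt_def.1 (hz.2 (by rw [Fin.lt_def]; omega))
    have bi1 := hlow i; have bi2 := hup i; have bj1 := hlow j; have bj2 := hup j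
    constructor
    · simp only [Fin.mk_le_mk]
      by_cases hiD : (i:ℕ) ∈ D
      · rw [if_pos hiD] at hstep; omega
      · rw [if_neg hiD] at hstep; omega
    · intro hiD
      simp only [Fin.mk_lt_mk]
      rw [if_pos hiD] at hstep
      omega
  · intro y hy
    funext p
    apply Fin.ext
    simp only [Fin.val_mk]
    have h1 := (y p).isLt
    omega
  · intro z hz
    rw [Finset.mem_coe, Finset.mem_filter] at hz
    have hlow : ∀ p : Fin n, cD D (p:ℕ) ≤ (z p : ℕ) := by
      intro p
      calc cD D (p:ℕ) ≤ (p:ℕ) := by have := c_add_e D (p:ℕ); omega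
        _ ≤ (z p : ℕ) := sm_le_apply hz.2 p
    have hup : ∀ p : Fin n, (z p : ℕ) ≤ a - 1 + cD D (p:ℕ) := by
      intro p
      have h1 := sm_upper hz.2 p
      have h2 := c_add_e D (p:ℕ)
      have h3 := e_le D (p:ℕ)
      have h4 := e_ge hD (p:ℕ)
      have h5 : (p:ℕ) ≤ n-1 := by have := p.isLt; omega
      omega
    funext p
    apply Fin.ext
    simp only [Fin.val_mk]
    have := hlow p; have := hup p
    omega

section Core
variable {n : ℕ} (T : Finset ℕ)

def Gf (n : ℕ) (T : Finset ℕ) (p : Fin n) : ℕ := (T.filter (fun t => t < (p:ℕ))).card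

lemma Gf_lt (hn : 0 < n) (p : Fin n) : Gf n T p < n := by
  have h1 : T.filter (fun t => t < (p:ℕ)) ⊆ Finset.range (p:ℕ) := by
    intro t ht
    exact Finset.mem_range.2 (Finset.mem_filter.1 ht).2
  have h2 := Finset.card_le_card h1
  rw [Finset.card_range] at h2
  exact lt_of_le_of_lt h2 p.isLt

lemma Gf_mono {p q : Fin n} (h : p ≤ q) : Gf n T p ≤ Gf n T q := by
  apply Finset.card_le_card
  intro t ht
  rw [Finset.mem_filter] at ht ⊢
  exact ⟨ht.1, lt_of_lt_of_le ht.2 (Fin.le_def.1 h)⟩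

lemma Gf_step {i j : Fin n} (hij : (i:ℕ)+1 = (j:ℕ)) :
    Gf n T j = Gf n T i + (if (i:ℕ) ∈ T then 1 else 0) := by
  unfold Gf
  have h1 : T.filter (fun t => t < (j:ℕ)) =
      T.filter (fun t => t < (i:ℕ)) ∪ T.filter (fun t => t = (i:ℕ)) := by
    rw [← Finset.filter_or]
    apply Finset.filter_congr
    intro t _
    constructor
    · intro h; omega
    · intro h; omega
  rw [h1, Finset.card_union_of_disjoint, Finset.filter_eq']
  · split_ifs with h
    · simp
    · simp
  · rw [Finset.disjoint_left]
    intro x hx hx'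
    rw [Finset.mem_filter] at hx hx'
    have := hx.2; have := hx'.2
    omega

def keyLt (m : Fin n → ℕ) (u v : Fin n) : Prop := m u < m v ∨ (m u = m v ∧ u < v)

instance (m : Fin n → ℕ) : DecidableRel (keyLt m) := fun _ _ => by
  unfold keyLt; infer_instance

lemma keyLt_irrefl (m : Fin n → ℕ) (u : Fin n) : ¬ keyLt m u u := by
  unfold keyLt
  simp

lemma keyLt_trans {m : Fin n → ℕ} {u v w : Fin n} (h1 : keyLt m u v) (h2 : keyLt m v w) :
    keyLt m u w := by
  unfold keyLt at *
  rcases h1 with h1 | ⟨h1, h1'⟩ <;> rcases h2 with h2 | ⟨h2, h2'⟩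
  · left; omega
  · left; omega
  · left; omega
  · right; exact ⟨by omega, h1'.trans h2'⟩

lemma keyLt_total {m : Fin n → ℕ} {u v : Fin n} (hne : u ≠ v) :
    keyLt m u v ∨ keyLt m v u := by
  unfold keyLt
  rcases lt_trichotomy (m u) (m v) with h | h | h
  · left; left; exact h
  · rcases lt_trichotomy u v with h' | h' | h'
    · left; right; exact ⟨h, h'⟩
    · exact absurd h' hne
    · right; right; exact ⟨h.symm, h'⟩
  · right; left; exact h

lemma keyLt_asymm {m : Fin n → ℕ} {u v : Fin n} (h1 : keyLt m u v) : ¬ keyLt m v u := by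
  intro h2
  exact keyLt_irrefl m u (keyLt_trans h1 h2)

def rankF (m : Fin n → ℕ) (u : Fin n) : ℕ := (Finset.univ.filter (fun v => keyLt m v u)).card

lemma rankF_lt (m : Fin n → ℕ) (u : Fin n) : rankF m u < n := by
  unfold rankF
  have h1 : Finset.univ.filter (fun v => keyLt m v u) ⊆ Finset.univ.erase u := by
    intro v hv
    rw [Finset.mem_filter] at hv
    apply Finset.mem_erase.2
    refine ⟨?_, Finset.mem_univ _⟩
    intro hvu
    rw [hvu] at hv
    exact keyLt_irrefl m u hv.2
  have h2 := Finset.card_le_card h1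
  rw [Finset.card_erase_of_mem (Finset.mem_univ u), Finset.card_univ, Fintype.card_fin] at h2
  have : 0 < n := u.pos
  omega

lemma rankF_strict {m : Fin n → ℕ} {u v : Fin n} (h : keyLt m u v) : rankF m u < rankF m v := by
  apply Finset.card_lt_card
  rw [Finset.ssubset_iff_of_subset]
  · exact ⟨u, Finset.mem_filter.2 ⟨Finset.mem_univ _, h⟩, by
      rw [Finset.mem_filter]
      rintro ⟨-, hc⟩
      exact keyLt_irrefl m u hc⟩
  · intro w hw
    rw [Finset.mem_filter] at hw ⊢
    exact ⟨Finset.mem_univ _, keyLt_trans hw.2 h⟩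

def rankFin (m : Fin n → ℕ) (u : Fin n) : Fin n := ⟨rankF m u, rankF_lt m u⟩

lemma rankFin_inj (m : Fin n → ℕ) : Function.Injective (rankFin m) := by
  intro u v h
  by_contra hne
  have h' : rankF m u = rankF m v := by
    have := congrArg Fin.val h
    simpa [rankFin] using this
  rcases keyLt_total (m := m) hne with hk | hk
  · exact absurd h' (Nat.ne_of_lt (rankF_strict hk))
  · exact absurd h'.symm (Nat.ne_of_lt (rankF_strict hk))

noncomputable def permρ (m : Fin n → ℕ) : Equiv.Perm (Fin n) :=
  Equiv.ofBijective (rankFin m) (Finite.injective_iff_bijective.1 (rankFin_inj m))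

lemma permρ_apply (m : Fin n → ℕ) (u : Fin n) : permρ m u = rankFin m u := rfl

lemma rank_reflect {m : Fin n → ℕ} {u v : Fin n} (hne : u ≠ v) :
    rankFin m u < rankFin m v ↔ keyLt m u v := by
  constructor
  · intro h
    rcases keyLt_total (m := m) hne with hk | hk
    · exact hk
    · exfalso
      have h1 : rankF m v < rankF m u := rankF_strict hk
      have h2 : rankF m u < rankF m v := h
      omega
  · intro hk
    rw [Fin.lt_def]
    exact rankF_strict hk

def Shape (n : ℕ) (T : Finset ℕ) (m : Fin n → ℕ) : Prop :=
  ∀ j : ℕ, (Finset.univ.filter (fun u => m u = j)).card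
    = (Finset.univ.filter (fun p => Gf n T p = j)).card

lemma filter_lt_succ {α : Type*} [Fintype α] [DecidableEq α] (g : α → ℕ) (j : ℕ) :
    (Finset.univ.filter (fun u => g u < j+1)).card
      = (Finset.univ.filter (fun u => g u < j)).card
        + (Finset.univ.filter (fun u => g u = j)).card := by
  rw [← Finset.card_union_of_disjoint]
  · congr 1
    rw [← Finset.filter_or]
    apply Finset.filter_congr
    intro u _
    constructor
    · intro h; omega
    · intro h; omega
  · rw [Finset.disjoint_left]
    intro x hx hx'
    rw [Finset.mem_filter] at hx hx'
    have := hx.2; have := hx'.2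
    omega

lemma shape_lt {m : Fin n → ℕ} (hm : Shape n T m) (j : ℕ) :
    (Finset.univ.filter (fun u => m u < j)).card
      = (Finset.univ.filter (fun p => Gf n T p < j)).card := by
  induction j with
  | zero => simp
  | succ j ih =>
    rw [filter_lt_succ, filter_lt_succ, ih, hm j]

lemma mem_downset {s : Finset (Fin n)}
    (hdown : ∀ p q : Fin n, q ≤ p → p ∈ s → q ∈ s) (p : Fin n) :
    p ∈ s ↔ (p:ℕ) < s.card := by
  constructor
  · intro hp
    have h1 : Finset.Iic p ⊆ s := fun q hq => hdown p q (Finset.mem_Iic.1 hq) hp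
    have h2 := Finset.card_le_card h1
    rw [Fin.card_Iic] at h2
    omega
  · intro hp
    by_contra hps
    have h1 : s ⊆ Finset.Iio p := by
      intro q hq
      rw [Finset.mem_Iio]
      by_contra hq2
      exact hps (hdown q p (not_lt.1 hq2) hq)
    have h2 := Finset.card_le_card h1
    rw [Fin.card_Iio] at h2
    omega

lemma G_rank {m : Fin n → ℕ} (hm : Shape n T m) (u : Fin n) :
    Gf n T (rankFin m u) = m u := by
  have hsplit : rankF m u
      = (Finset.univ.filter (fun v => m v < m u)).card
        + (Finset.univ.filter (fun v => m v = m u ∧ v < u)).card := by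
    unfold rankF
    rw [← Finset.card_union_of_disjoint]
    · congr 1
      rw [← Finset.filter_or]
      apply Finset.filter_congr
      intro v _
      unfold keyLt
      exact Iff.rfl
    · rw [Finset.disjoint_left]
      intro x hx hx'
      rw [Finset.mem_filter] at hx hx'
      have := hx.2; have := hx'.2.1
      omega
  set A : Finset (Fin n) := Finset.univ.filter (fun p => Gf n T p < m u) with hA
  set AB : Finset (Fin n) := Finset.univ.filter (fun p => Gf n T p ≤ m u) with hAB
  have hdownA : ∀ p q : Fin n, q ≤ p → p ∈ A → q ∈ A := by
    intro p q hqp hp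
    rw [hA, Finset.mem_filter] at hp ⊢
    exact ⟨Finset.mem_univ _, lt_of_le_of_lt (Gf_mono T hqp) hp.2⟩
  have hdownAB : ∀ p q : Fin n, q ≤ p → p ∈ AB → q ∈ AB := by
    intro p q hqp hp
    rw [hAB, Finset.mem_filter] at hp ⊢
    exact ⟨Finset.mem_univ _, le_trans (Gf_mono T hqp) hp.2⟩
  have hAcard : (Finset.univ.filter (fun v => m v < m u)).card = A.card := shape_lt T hm (m u)
  have hless : (Finset.univ.filter (fun v => m v = m u ∧ v < u)).card
      < (Finset.univ.filter (fun p => Gf n T p = m u)).card := by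
    rw [← hm (m u)]
    apply Finset.card_lt_card
    rw [Finset.ssubset_iff_of_subset]
    · refine ⟨u, Finset.mem_filter.2 ⟨Finset.mem_univ _, rfl⟩, ?_⟩
      rw [Finset.mem_filter]
      rintro ⟨-, -, hc⟩
      exact lt_irrefl u hc
    · intro v hv
      rw [Finset.mem_filter] at hv ⊢
      exact ⟨Finset.mem_univ _, hv.2.1⟩
  have hABcard : AB.card = A.card + (Finset.univ.filter (fun p => Gf n T p = m u)).card := by
    rw [hAB, hA, ← Finset.card_union_of_disjoint]
    · congr 1
      rw [← Finset.filter_or]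
      apply Finset.filter_congr
      intro p _
      constructor
      · intro h; omega
      · intro h; omega
    · rw [Finset.disjoint_left]
      intro x hx hx'
      rw [Finset.mem_filter] at hx hx'
      have := hx.2; have := hx'.2
      omega
  have hval : (rankFin m u : ℕ) = rankF m u := rfl
  have hnotA : rankFin m u ∉ A := by
    rw [mem_downset hdownA, hval, hsplit, ← hAcard]
    omega
  have hinAB : rankFin m u ∈ AB := by
    rw [mem_downset hdownAB, hval, hsplit, hABcard, ← hAcard]
    omega
  rw [hA, Finset.mem_filter] at hnotA
  rw [hAB, Finset.mem_filter] at hinAB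
  have h1 : ¬ Gf n T (rankFin m u) < m u := fun hc => hnotA ⟨Finset.mem_univ _, hc⟩
  omega

end Core

section Perm
variable {n : ℕ} {T : Finset ℕ}

lemma adj_case {τ : Equiv.Perm (Fin n)} (hτ : desSet n τ ⊆ T) {p q : Fin n}
    (h : (p:ℕ)+1 = (q:ℕ)) (hG : Gf n T p = Gf n T q) : τ p < τ q := by
  have hpT : (p:ℕ) ∉ T := by
    have hs := Gf_step T h
    by_cases hc : (p:ℕ) ∈ T
    · rw [if_pos hc] at hs; omega
    · exact hc
  have hpD : (p:ℕ) ∉ desSet n τ := fun hc => hpT (hτ hc)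
  rw [mem_desSet τ h] at hpD
  have hne : τ p ≠ τ q := by
    intro hc
    have := τ.injective hc
    rw [Fin.ext_iff] at this
    omega
  exact lt_of_le_of_ne (not_lt.1 hpD) hne

lemma blocks_mono {τ : Equiv.Perm (Fin n)} (hτ : desSet n τ ⊆ T) :
    ∀ p q : Fin n, p < q → Gf n T p = Gf n T q → τ p < τ q := by
  suffices H : ∀ k : ℕ, ∀ p q : Fin n, (q:ℕ) = (p:ℕ) + k + 1 → Gf n T p = Gf n T q → τ p < τ q by
    intro p q hpq hG
    have hv := Fin.lt_def.1 hpq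
    exact H ((q:ℕ) - (p:ℕ) - 1) p q (by omega) hG
  intro k
  induction k with
  | zero =>
    intro p q hq hG
    exact adj_case hτ (by omega) hG
  | succ k ih =>
    intro p q hq hG
    have hm : (p:ℕ) + k + 1 < n := by have := q.isLt; omega
    set r : Fin n := ⟨(p:ℕ)+k+1, hm⟩ with hr
    have hpr : p ≤ r := by rw [Fin.le_def]; simp [hr]; omega
    have hrq : r ≤ q := by rw [Fin.le_def]; simp [hr]; omega
    have h1 : Gf n T p = Gf n T r := le_antisymm (Gf_mono T hpr) (hG ▸ Gf_mono T hrq)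
    have h2 : Gf n T r = Gf n T q := by
      have := Gf_mono T hpr
      have := Gf_mono T hrq
      omega
    exact (ih p r rfl h1).trans (adj_case hτ (by simp [hr]; omega) h2)

lemma keyLt_of_perm {τ : Equiv.Perm (Fin n)} (hτ : desSet n τ ⊆ T) {u v : Fin n} (hne : u ≠ v) :
    τ⁻¹ u < τ⁻¹ v ↔ keyLt (fun w => Gf n T (τ⁻¹ w)) u v := by
  have fwd : ∀ u v : Fin n, u ≠ v → τ⁻¹ u < τ⁻¹ v → keyLt (fun w => Gf n T (τ⁻¹ w)) u v := by
    intro u v hne hlt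
    have hle : Gf n T (τ⁻¹ u) ≤ Gf n T (τ⁻¹ v) := Gf_mono T hlt.le
    rcases lt_or_eq_of_le hle with h | h
    · exact Or.inl h
    · refine Or.inr ⟨h, ?_⟩
      have := blocks_mono hτ _ _ hlt h
      simpa using this
  constructor
  · exact fwd u v hne
  · intro hk
    rcases lt_trichotomy (τ⁻¹ u) (τ⁻¹ v) with h | h | h
    · exact h
    · exact absurd (τ⁻¹.injective h) hne
    · exact absurd hk (keyLt_asymm (fwd v u hne.symm h))

lemma rank_of_perm {τ : Equiv.Perm (Fin n)} (hτ : desSet n τ ⊆ T) (u : Fin n) :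
    rankFin (fun w => Gf n T (τ⁻¹ w)) u = τ⁻¹ u := by
  apply Fin.ext
  show rankF (fun w => Gf n T (τ⁻¹ w)) u = ((τ⁻¹ u : Fin n) : ℕ)
  unfold rankF
  have h1 : Finset.univ.filter (fun v => keyLt (fun w => Gf n T (τ⁻¹ w)) v u)
      = Finset.univ.filter (fun v => τ⁻¹ v < τ⁻¹ u) := by
    apply Finset.filter_congr
    intro v _
    by_cases hvu : v = u
    · subst hvu
      simp [keyLt_irrefl]
    · exact (keyLt_of_perm hτ hvu).symm
  rw [h1]
  have h2 : (Finset.univ.filter (fun v => τ⁻¹ v < τ⁻¹ u)).card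
      = (Finset.univ.filter (fun w : Fin n => w < τ⁻¹ u)).card := by
    apply Finset.card_nbij' (i := fun v => τ⁻¹ v) (j := fun w => τ w)
    · intro v hv
      rw [Finset.mem_coe, Finset.mem_filter] at hv ⊢
      exact ⟨Finset.mem_univ _, hv.2⟩
    · intro w hw
      rw [Finset.mem_coe, Finset.mem_filter] at hw ⊢
      simpa using hw.2
    · intro v _; simp
    · intro w _; simp
  rw [h2]
  have h3 : Finset.univ.filter (fun w : Fin n => w < τ⁻¹ u) = Finset.Iio (τ⁻¹ u) := by
    ext w
    simp [Finset.mem_Iio]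
  rw [h3, Fin.card_Iio]

lemma shape_of_perm {τ : Equiv.Perm (Fin n)} (hτ : desSet n τ ⊆ T) :
    Shape n T (fun u => Gf n T (τ⁻¹ u)) := by
  intro j
  apply Finset.card_nbij' (i := fun u => τ⁻¹ u) (j := fun p => τ p)
  · intro u hu
    rw [Finset.mem_coe, Finset.mem_filter] at hu ⊢
    exact ⟨Finset.mem_univ _, hu.2⟩
  · intro p hp
    rw [Finset.mem_coe, Finset.mem_filter] at hp ⊢
    refine ⟨Finset.mem_univ _, ?_⟩
    simpa using hp.2
  · intro u _; simp
  · intro p _; simp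

lemma shape_comp {m : Fin n → ℕ} (hm : Shape n T m) (π : Equiv.Perm (Fin n)) :
    Shape n T (fun u => m (π u)) := by
  intro j
  rw [← hm j]
  apply Finset.card_nbij' (i := fun u => π u) (j := fun v => π⁻¹ v)
  · intro u hu
    rw [Finset.mem_coe, Finset.mem_filter] at hu ⊢
    exact ⟨Finset.mem_univ _, hu.2⟩
  · intro v hv
    rw [Finset.mem_coe, Finset.mem_filter] at hv ⊢
    refine ⟨Finset.mem_univ _, ?_⟩
    simpa using hv.2
  · intro u _; simp
  · intro v _; simp

lemma des_permρ {m : Fin n → ℕ} (hm : Shape n T m) :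
    desSet n ((permρ m)⁻¹ : Equiv.Perm (Fin n)) ⊆ T := by
  intro i hi
  have hir := Finset.mem_range.1 (desSet_subset n _ hi)
  have hin : i < n := by omega
  have hjn : i + 1 < n := by omega
  set fi : Fin n := ⟨i, hin⟩ with hfi
  set fj : Fin n := ⟨i+1, hjn⟩ with hfj
  have hadj : (fi:ℕ) + 1 = (fj:ℕ) := rfl
  have hdes : (permρ m)⁻¹ fj < (permρ m)⁻¹ fi := by
    have := (mem_desSet ((permρ m)⁻¹) hadj).1 (by simpa [hfi] using hi)
    exact this
  set u : Fin n := (permρ m)⁻¹ fi with hu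
  set v : Fin n := (permρ m)⁻¹ fj with hv
  have hru : permρ m u = fi := by rw [hu]; simp
  have hrv : permρ m v = fj := by rw [hv]; simp
  have hne : u ≠ v := by
    intro hc
    rw [hu, hv] at hc
    have := (permρ m)⁻¹.injective hc
    rw [Fin.ext_iff] at this
    simp [hfi, hfj] at this
  have hrank : rankFin m u < rankFin m v := by
    have e1 : rankFin m u = fi := hru
    have e2 : rankFin m v = fj := hrv
    rw [e1, e2, Fin.lt_def]
    simp [hfi, hfj]
  have hkey : keyLt m u v := (rank_reflect hne).1 hrank
  have hmuv : m u < m v := by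
    rcases hkey with h | ⟨-, h⟩
    · exact h
    · exact absurd hdes (by rw [← hu, ← hv] at *; exact not_lt.2 h.le)
  have hGu : Gf n T fi = m u := by rw [← hru]; exact G_rank T hm u
  have hGv : Gf n T fj = m v := by rw [← hrv]; exact G_rank T hm v
  have hs := Gf_step T hadj
  by_cases hc : (fi:ℕ) ∈ T
  · simpa [hfi] using hc
  · rw [if_neg hc] at hs
    omega

end Perm

section Assembly
variable {n a : ℕ}

def WCond (n a : ℕ) (D T : Finset ℕ) (x : (Fin n → Fin a) × (Fin n → Fin n)) : Prop :=
  (∀ i j : Fin n, (i:ℕ)+1 = (j:ℕ) →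
     (x.1 i ≤ x.1 j ∧ (x.1 i = x.1 j → (x.2 i : ℕ) ≤ (x.2 j : ℕ)) ∧
       ((i:ℕ) ∈ D → x.1 i = x.1 j → (x.2 i : ℕ) < (x.2 j : ℕ)))) ∧
  ∀ j ∈ Finset.range n,
    (Finset.univ.filter (fun u => (x.2 u : ℕ) = j)).card
      = (Finset.univ.filter (fun p => Gf n T p = j)).card

instance (D T : Finset ℕ) : DecidablePred (WCond n a D T) := fun _ => by
  unfold WCond; infer_instance

lemma shape_of_bounded {T : Finset ℕ} {m : Fin n → ℕ} (hb : ∀ u, m u < n)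
    (h : ∀ j ∈ Finset.range n, (Finset.univ.filter (fun u => m u = j)).card
      = (Finset.univ.filter (fun p => Gf n T p = j)).card) : Shape n T m := by
  intro j
  by_cases hj : j < n
  · exact h j (Finset.mem_range.2 hj)
  · have h1 : Finset.univ.filter (fun u => m u = j) = ∅ := by
      rw [Finset.filter_eq_empty_iff]
      intro u _
      have := hb u
      omega
    have h2 : Finset.univ.filter (fun p : Fin n => Gf n T p = j) = ∅ := by
      rw [Finset.filter_eq_empty_iff]
      intro p _
      have := Gf_lt T p.pos p
      omega
    rw [h1, h2]

lemma core (σ : Equiv.Perm (Fin n)) (T : Finset ℕ) (hn : 0 < n) :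
    ∑ τ ∈ Finset.univ.filter (fun τ : Equiv.Perm (Fin n) => desSet n τ ⊆ T),
        (Finset.univ.filter
          (fun y : Fin n → Fin a => AdjCond n (desSet n (τ⁻¹ * σ)) y)).card
      = ((Finset.univ ×ˢ Finset.univ :
            Finset ((Fin n → Fin a) × (Fin n → Fin n))).filter
          (WCond n a (desSet n σ) T)).card := by
  rw [← Finset.card_sigma]
  refine Finset.card_nbij'
    (i := fun x => (x.2, fun t => (⟨Gf n T (x.1⁻¹ (σ t)), Gf_lt T hn _⟩ : Fin n)))
    (j := fun x => ⟨(permρ (fun u => ((x.2 (σ⁻¹ u) : Fin n) : ℕ)))⁻¹, x.1⟩) ?_ ?_ ?_ ?_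
  · -- forward well-defined
    intro x hx
    simp only [Finset.mem_coe, Finset.mem_sigma, Finset.mem_filter] at hx
    obtain ⟨⟨-, hτ⟩, -, hy⟩ := hx
    simp only [Finset.mem_coe, Finset.mem_filter, Finset.mem_product]
    refine ⟨⟨Finset.mem_univ _, Finset.mem_univ _⟩, ?_, ?_⟩
    · intro i j hij
      obtain ⟨h1, h2⟩ := hy i j hij
      have hijne : (i:ℕ) ≠ (j:ℕ) := by omega
      have hne : σ i ≠ σ j := by
        intro hc
        have := σ.injective hc
        rw [Fin.ext_iff] at this
        omega
      have hkk : x.2 i = x.2 j → keyLt (fun w => Gf n T (x.1⁻¹ w)) (σ i) (σ j) := by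
        intro hq
        have hnd : (i:ℕ) ∉ desSet n (x.1⁻¹ * σ) := by
          intro hc
          exact absurd (h2 hc) (by rw [hq]; exact lt_irrefl _)
        rw [mem_desSet _ hij] at hnd
        have hπne : (x.1⁻¹ * σ) i ≠ (x.1⁻¹ * σ) j := by
          intro hc
          have := (x.1⁻¹ * σ).injective hc
          rw [Fin.ext_iff] at this
          omega
        have hπlt : (x.1⁻¹ * σ) i < (x.1⁻¹ * σ) j := lt_of_le_of_ne (not_lt.1 hnd) hπne
        exact (keyLt_of_perm hτ hne).1 (by simpa [Equiv.Perm.mul_apply] using hπlt)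
      refine ⟨h1, fun hq => ?_, fun hiD hq => ?_⟩
      · show Gf n T (x.1⁻¹ (σ i)) ≤ Gf n T (x.1⁻¹ (σ j))
        rcases hkk hq with hlt | ⟨heq, -⟩
        · exact hlt.le
        · exact le_of_eq heq
      · show Gf n T (x.1⁻¹ (σ i)) < Gf n T (x.1⁻¹ (σ j))
        have hσ : σ j < σ i := (mem_desSet σ hij).1 hiD
        rcases hkk hq with hlt | ⟨-, huv⟩
        · exact hlt
        · exact absurd hσ (not_lt.2 huv.le)
    · -- shape
      have hS : Shape n T (fun t => Gf n T (x.1⁻¹ (σ t))) := by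
        have h0 : Shape n T (fun w => Gf n T (x.1⁻¹ w)) := shape_of_perm hτ
        exact shape_comp h0 σ
      intro j _
      exact hS j
  · -- backward well-defined
    intro x hx
    simp only [Finset.mem_coe, Finset.mem_filter] at hx
    obtain ⟨-, hadj, hsh⟩ := hx
    have hShape : Shape n T (fun u => ((x.2 (σ⁻¹ u) : Fin n) : ℕ)) := by
      have h0 : Shape n T (fun u => ((x.2 u : Fin n) : ℕ)) :=
        shape_of_bounded (fun u => (x.2 u).isLt) hsh
      exact shape_comp h0 σ⁻¹
    simp only [Finset.mem_coe, Finset.mem_sigma, Finset.mem_filter]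
    refine ⟨⟨Finset.mem_univ _, des_permρ hShape⟩, Finset.mem_univ _, ?_⟩
    intro i j hij
    obtain ⟨h1, h2, h3⟩ := hadj i j hij
    refine ⟨h1, ?_⟩
    intro hiDπ
    by_contra hnlt
    have hq : x.1 i = x.1 j := le_antisymm h1 (not_lt.1 hnlt)
    have hσne : σ j ≠ σ i := by
      intro hc
      have := σ.injective hc
      rw [Fin.ext_iff] at this
      omega
    have hdes := (mem_desSet _ hij).1 hiDπ
    have hdes' : rankFin (fun u => ((x.2 (σ⁻¹ u) : Fin n) : ℕ)) (σ j)
        < rankFin (fun u => ((x.2 (σ⁻¹ u) : Fin n) : ℕ)) (σ i) := by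
      simpa [Equiv.Perm.mul_apply, permρ_apply] using hdes
    have hkey := (rank_reflect hσne).1 hdes'
    have hmi : (fun u => ((x.2 (σ⁻¹ u) : Fin n) : ℕ)) (σ i) = (x.2 i : ℕ) := by simp
    have hmj : (fun u => ((x.2 (σ⁻¹ u) : Fin n) : ℕ)) (σ j) = (x.2 j : ℕ) := by simp
    rcases hkey with hlt | ⟨heq, hvu⟩
    · rw [hmi, hmj] at hlt
      have := h2 hq
      omega
    · have hiD : (i:ℕ) ∈ desSet n σ := (mem_desSet σ hij).2 hvu
      rw [hmi, hmj] at heq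
      have := h3 hiD hq
      omega
  · -- left inverse
    intro x hx
    simp only [Finset.mem_coe, Finset.mem_sigma, Finset.mem_filter] at hx
    obtain ⟨⟨-, hτ⟩, -⟩ := hx
    dsimp only
    refine Sigma.ext ?_ ?_
    · show _ = x.1
      rw [inv_eq_iff_eq_inv]
      apply Equiv.ext
      intro u
      have hr := rank_of_perm hτ u
      show rankFin _ u = x.1⁻¹ u
      rw [← hr]
      congr 1
      funext w
      simp
    · exact HEq.rfl
  · -- right inverse
    intro x hx
    simp only [Finset.mem_coe, Finset.mem_filter] at hx
    obtain ⟨-, hadj, hsh⟩ := hx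
    have hShape : Shape n T (fun u => ((x.2 (σ⁻¹ u) : Fin n) : ℕ)) := by
      have h0 : Shape n T (fun u => ((x.2 u : Fin n) : ℕ)) :=
        shape_of_bounded (fun u => (x.2 u).isLt) hsh
      exact shape_comp h0 σ⁻¹
    dsimp only
    refine Prod.ext rfl ?_
    funext t
    apply Fin.ext
    simp only [inv_inv]
    show Gf n T (permρ (fun u => ((x.2 (σ⁻¹ u) : Fin n) : ℕ)) (σ t)) = ((x.2 t : Fin n) : ℕ)
    have h1 := G_rank T hShape (σ t)
    exact h1.trans (by simp)

end Assembly

section Final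
variable {n a : ℕ}

lemma Nsub_eq (ha : 1 ≤ a) (hn : 1 ≤ n) (σ : Equiv.Perm (Fin n)) (T : Finset ℕ) :
    ∑ τ ∈ Finset.univ.filter (fun τ : Equiv.Perm (Fin n) => desSet n τ ⊆ T),
        (n + a - 1 - des n (τ⁻¹ * σ)).choose n
      = ((Finset.univ ×ˢ Finset.univ :
            Finset ((Fin n → Fin a) × (Fin n → Fin n))).filter
          (WCond n a (desSet n σ) T)).card := by
  rw [← core σ T hn]
  apply Finset.sum_congr rfl
  intro τ _
  exact (lemma1 ha hn (desSet_subset n (τ⁻¹ * σ))).symm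

lemma partition (σ : Equiv.Perm (Fin n)) (T : Finset ℕ) (f : Equiv.Perm (Fin n) → ℕ) :
    ∑ τ ∈ Finset.univ.filter (fun τ : Equiv.Perm (Fin n) => desSet n τ ⊆ T), f τ
      = ∑ U ∈ T.powerset, ∑ τ ∈ Finset.univ.filter
          (fun τ : Equiv.Perm (Fin n) => desSet n τ = U), f τ := by
  rw [← Finset.sum_fiberwise_of_maps_to (g := fun τ => desSet n τ)
    (t := T.powerset) ?_ f]
  · apply Finset.sum_congr rfl
    intro U hU
    apply Finset.sum_congr ?_ (fun _ _ => rfl)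
    ext τ
    simp only [Finset.mem_filter, Finset.mem_univ, true_and]
    constructor
    · rintro ⟨hsub, heq⟩
      exact heq
    · rintro heq
      exact ⟨heq ▸ Finset.mem_powerset.1 hU, heq⟩
  · intro τ hτ
    rw [Finset.mem_filter] at hτ
    exact Finset.mem_powerset.2 hτ.2

lemma Neq (ha : 1 ≤ a) (hn : 1 ≤ n) (σ σ' : Equiv.Perm (Fin n))
    (h : desSet n σ = desSet n σ') (S : Finset ℕ) :
    ∑ τ ∈ Finset.univ.filter (fun τ : Equiv.Perm (Fin n) => desSet n τ = S),
        (n + a - 1 - des n (τ⁻¹ * σ)).choose n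
      = ∑ τ ∈ Finset.univ.filter (fun τ : Equiv.Perm (Fin n) => desSet n τ = S),
        (n + a - 1 - des n (τ⁻¹ * σ')).choose n := by
  induction S using Finset.strongInduction with
  | _ S ih =>
    have hsub : ∑ τ ∈ Finset.univ.filter (fun τ : Equiv.Perm (Fin n) => desSet n τ ⊆ S),
          (n + a - 1 - des n (τ⁻¹ * σ)).choose n
        = ∑ τ ∈ Finset.univ.filter (fun τ : Equiv.Perm (Fin n) => desSet n τ ⊆ S),
          (n + a - 1 - des n (τ⁻¹ * σ')).choose n := by
      rw [Nsub_eq ha hn σ S, Nsub_eq ha hn σ' S, h]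
    rw [partition σ S _, partition σ' S _] at hsub
    have hmem : S ∈ S.powerset := Finset.mem_powerset.2 (subset_refl S)
    rw [← Finset.sum_erase_add _ _ hmem, ← Finset.sum_erase_add _ _ hmem] at hsub
    have heq : ∑ U ∈ S.powerset.erase S,
          (∑ τ ∈ Finset.univ.filter (fun τ : Equiv.Perm (Fin n) => desSet n τ = U),
            (n + a - 1 - des n (τ⁻¹ * σ)).choose n)
        = ∑ U ∈ S.powerset.erase S,
          (∑ τ ∈ Finset.univ.filter (fun τ : Equiv.Perm (Fin n) => desSet n τ = U),
            (n + a - 1 - des n (τ⁻¹ * σ')).choose n) := by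
      apply Finset.sum_congr rfl
      intro U hU
      rw [Finset.mem_erase] at hU
      have hss : U ⊂ S := Finset.ssubset_iff_subset_ne.2 ⟨Finset.mem_powerset.1 hU.2, hU.1⟩
      exact ih U hss
    omega

end Final

end Stmt9

/-- The descent set is a Markov statistic for the `a`-handed riffle shuffle:
the probability of producing a prescribed descent set depends only on the
descent set of the starting deck. -/
theorem stmt9 (n a : ℕ) (hn : 1 ≤ n) (ha : 1 ≤ a) (σ σ' : Equiv.Perm (Fin n))
    (h : desSet n σ = desSet n σ') (S : Finset ℕ) :
    ∑ τ ∈ Finset.univ.filter (fun τ : Equiv.Perm (Fin n) => desSet n τ = S), Pa n a σ τ =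
    ∑ τ ∈ Finset.univ.filter (fun τ : Equiv.Perm (Fin n) => desSet n τ = S), Pa n a σ' τ := by
  simp only [Pa]
  rw [← Finset.sum_div, ← Finset.sum_div, ← Nat.cast_sum, ← Nat.cast_sum,
    Stmt9.Neq ha hn σ σ' h S]
end

section
/- The descent set is a Markov statistic for the top-or-bottom-to-random shuffle: for every integer n ≥ 1, every parameter q ∈ [0,1], all σ, σ' ∈ S_n with Des(σ) = Des(σ'), and every subset S ⊆ {1,…,n−1}, one has Σ_{τ ∈ S_n : Des(τ) = S} P_q(σ,τ) = Σ_{τ ∈ S_n : Des(τ) = S} P_q(σ',τ). -/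
open Finset

/-- the cycle `e_i` (0-indexed): sends `j ↦ j-1` for `j > i`, `i ↦ n-1`, fixes `j < i`.
(`Fin.cycleRange i` is the cycle `c_i` (0-indexed): sends `j ↦ j+1` for `j < i`,
`i ↦ 0`, fixes `j > i`.) -/
def botCycle (n : ℕ) (i : Fin n) : Equiv.Perm (Fin n) :=
  Fin.revPerm * Fin.cycleRange i.rev * Fin.revPerm

/-- top-or-bottom-to-random transition matrix with parameter `q`:
with probability `q` remove the top card and reinsert it at a uniform position,
otherwise do the same with the bottom card. -/
noncomputable def Pq (n : ℕ) (q : ℝ) : Matrix (Equiv.Perm (Fin n)) (Equiv.Perm (Fin n)) ℝ :=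
  fun σ τ =>
    q / n * ((Finset.univ.filter (fun i : Fin n => τ = σ * Fin.cycleRange i)).card : ℝ) +
    (1 - q) / n * ((Finset.univ.filter (fun i : Fin n => τ = σ * botCycle n i)).card : ℝ)

def wd (n : ℕ) (σ : Equiv.Perm (Fin n)) : ℕ → ℕ :=
  fun j => if h : j < n then (σ ⟨j, h⟩ : ℕ) else 0

/-- descent set of a word -/

def DS (n : ℕ) (w : ℕ → ℕ) : Finset ℕ :=
  (Finset.range (n - 1)).filter (fun j => w (j+1) < w j)

lemma mem_DS {n : ℕ} {w : ℕ → ℕ} {j : ℕ} : j ∈ DS n w ↔ j + 1 < n ∧ w (j+1) < w j := by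
  simp only [DS, mem_filter, mem_range]
  constructor <;> rintro ⟨h1, h2⟩ <;> exact ⟨by omega, h2⟩

lemma desSet_eq (n : ℕ) (σ : Equiv.Perm (Fin n)) : desSet n σ = DS n (wd n σ) := by
  ext j
  simp only [desSet, DS, mem_filter, mem_range]
  constructor
  · rintro ⟨h1, h2, h3⟩
    refine ⟨h1, ?_⟩
    simp only [wd, dif_pos h2, dif_pos (Nat.lt_of_succ_lt h2)]
    exact h3
  · rintro ⟨h1, h2⟩
    have hj1 : j + 1 < n := by omega
    refine ⟨h1, hj1, ?_⟩
    simpa only [wd, dif_pos hj1, dif_pos (Nat.lt_of_succ_lt hj1), ← Fin.lt_def] using h2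

def cval (i : ℕ) : ℕ → ℕ := fun j => if j < i then j + 1 else if j = i then 0 else j

lemma cval_lt {n i j : ℕ} (hi : i < n) (hj : j < n) : cval i j < n := by
  unfold cval; split_ifs <;> omega

lemma wd_mul_cycleRange (m : ℕ) (σ : Equiv.Perm (Fin (m+1))) (i : Fin (m+1)) :
    wd (m+1) (σ * Fin.cycleRange i) = (wd (m+1) σ) ∘ (cval i.val) := by
  funext j
  by_cases hj : j < m + 1
  · have hc : cval i.val j < m + 1 := cval_lt i.isLt hj
    have key : Fin.cycleRange i ⟨j, hj⟩ = ⟨cval i.val j, hc⟩ := by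
      apply Fin.ext
      rcases lt_trichotomy j i.val with h | h | h
      · rw [Fin.coe_cycleRange_of_lt (show (⟨j, hj⟩ : Fin (m+1)) < i from h)]
        simp [cval, h]
      · have : (⟨j, hj⟩ : Fin (m+1)) = i := Fin.ext h
        rw [this, Fin.cycleRange_self]
        simp [cval, h]
      · rw [Fin.cycleRange_of_gt (show i < (⟨j, hj⟩ : Fin (m+1)) from h)]
        simp only [cval]
        rw [if_neg (by omega), if_neg (by omega)]
    have happ : (σ * Fin.cycleRange i) ⟨j, hj⟩ = σ ⟨cval i.val j, hc⟩ := by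
      rw [Equiv.Perm.mul_apply, key]
    simp only [wd, Function.comp, dif_pos hj, dif_pos hc, happ]
  · have hc : ¬ (cval i.val j < m + 1) := by
      have := i.isLt
      unfold cval; split_ifs <;> omega
    simp only [wd, Function.comp, dif_neg hj, dif_neg hc]

lemma cval_of_lt {i j : ℕ} (h : j < i) : cval i j = j + 1 := if_pos h

lemma cval_self (i : ℕ) : cval i i = 0 := by simp [cval]

lemma cval_of_gt {i j : ℕ} (h : i < j) : cval i j = j := by
  simp only [cval]; rw [if_neg (by omega), if_neg (by omega)]

/-- witness predicate: `S` is a possible descent set of a top-insertion at position `i`,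
given original descent set `D` -/

def Wit (n : ℕ) (D S : Finset ℕ) (i : ℕ) : Prop :=
  i < n ∧ S ⊆ Finset.range (n-1) ∧
  (∀ j, j+1 < i → (j ∈ S ↔ j+1 ∈ D)) ∧
  (∀ j, i < j → (j ∈ S ↔ j ∈ D)) ∧
  (i = 0 → ((0:ℕ) ∈ S ↔ (0:ℕ) ∈ D)) ∧
  (1 ≤ i → i+1 < n → ((i-1 ∈ S ∧ i ∈ S → i ∈ D) ∧ (i-1 ∉ S ∧ i ∉ S → i ∉ D)))

lemma DS_sound (hinj : ∀ a b, a < n → b < n → w a = w b → a = b)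
    {i : ℕ} (hi : i < n) : Wit n (DS n w) (DS n (w ∘ cval i)) i := by
  have mS : ∀ j, j ∈ DS n (w ∘ cval i) ↔ j + 1 < n ∧ w (cval i (j+1)) < w (cval i j) :=
    fun j => mem_DS
  refine ⟨hi, filter_subset _ _, ?_, ?_, ?_, ?_⟩
  · intro j hj
    rw [mS, mem_DS, cval_of_lt (show j < i by omega), cval_of_lt hj]
    constructor <;> rintro ⟨h1, h2⟩ <;> exact ⟨by omega, h2⟩
  · intro j hj
    rw [mS, mem_DS, cval_of_gt hj, cval_of_gt (by omega)]
  · rintro rfl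
    rw [mS, mem_DS, cval_self, cval_of_gt (by omega)]
  · intro h1 h2
    obtain ⟨k, rfl⟩ : ∃ k, i = k + 1 := ⟨i - 1, by omega⟩
    have e1 : (k + 1 - 1 : ℕ) = k := by omega
    rw [e1]
    have mk : k ∈ DS n (w ∘ cval (k+1)) ↔ k + 1 < n ∧ w 0 < w (k+1) := by
      rw [mS, cval_self, cval_of_lt (by omega)]
    have mk1 : k + 1 ∈ DS n (w ∘ cval (k+1)) ↔ k + 2 < n ∧ w (k+2) < w 0 := by
      rw [mS, cval_self, cval_of_gt (by omega)]
    have mD : k + 1 ∈ DS n w ↔ k + 2 < n ∧ w (k+2) < w (k+1) := mem_DS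
    constructor
    · rintro ⟨hk, hk1⟩
      rw [mk] at hk; rw [mk1] at hk1; rw [mD]
      exact ⟨hk1.1, lt_trans hk1.2 hk.2⟩
    · rintro ⟨hk, hk1⟩ hD
      rw [mD] at hD
      rw [mk] at hk; rw [mk1] at hk1
      push_neg at hk hk1
      have h3 : w (k+1) < w 0 :=
        lt_of_le_of_ne (hk (by omega))
          (fun h => by have := hinj _ _ (by omega) (by omega) h; omega)
      have h4 : w 0 < w (k+2) :=
        lt_of_le_of_ne (hk1 (by omega))
          (fun h => by have := hinj _ _ (by omega) (by omega) h.symm; omega)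
      omega

lemma DS_injective (hinj : ∀ a b, a < n → b < n → w a = w b → a = b)
    {i k : ℕ} (hik : i < k) (hkn : k < n) :
    DS n (w ∘ cval i) ≠ DS n (w ∘ cval k) := by
  intro hEq
  have mS : ∀ (l : ℕ) j, j ∈ DS n (w ∘ cval l) ↔ j + 1 < n ∧ w (cval l (j+1)) < w (cval l j) :=
    fun l j => mem_DS
  -- strictness helper
  have str : ∀ a b : ℕ, a < n → b < n → a ≠ b → ¬ (w a < w b) → w b < w a := by
    intro a b ha hb hab hlt
    rcases lt_trichotomy (w a) (w b) with h | h | h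
    · exact absurd h hlt
    · exact absurd (hinj _ _ ha hb h) hab
    · exact h
  have fii : i ∈ DS n (w ∘ cval i) ↔ i + 1 < n ∧ w (i+1) < w 0 := by
    rw [mS, cval_self, cval_of_gt (by omega)]
  have fik : ∀ j, i < j → j + 1 < n → (j ∈ DS n (w ∘ cval i) ↔ w (j+1) < w j) := by
    intro j hj hjn
    rw [mS, cval_of_gt hj, cval_of_gt (by omega)]
    exact and_iff_right hjn
  have gk : ∀ j, j + 1 < k → (j ∈ DS n (w ∘ cval k) ↔ w (j+2) < w (j+1)) := by
    intro j hj
    rw [mS, cval_of_lt (show j < k by omega), cval_of_lt hj]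
    exact and_iff_right (by omega)
  have gk1 : k - 1 ∈ DS n (w ∘ cval k) ↔ w 0 < w k := by
    have e1 : k - 1 + 1 = k := by omega
    rw [mS, e1, cval_self, cval_of_lt (by omega), e1]
    exact and_iff_right (by omega)
  by_cases hb : w (i+1) < w 0
  · -- descending chain
    rcases Nat.lt_or_ge (i+1) k with hk2 | hk2
    · -- k ≥ i + 2
      have claim1 : ∀ t, 1 ≤ t → i + t ≤ k - 1 → w (i+t+1) < w (i+t) := by
        intro t
        induction t with
        | zero => omega
        | succ s ih =>
          intro _ hs
          rcases Nat.eq_or_lt_of_le (show 1 ≤ s + 1 from by omega) with h1 | h1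
          · -- s + 1 = 1
            have hs0 : s = 0 := by omega
            subst hs0
            have hi' : i ∈ DS n (w ∘ cval k) := by
              rw [← hEq, fii]; exact ⟨by omega, hb⟩
            rw [gk i (by omega)] at hi'
            simpa using hi'
          · have hs1 : 1 ≤ s := by omega
            have hw : w (i+s+1) < w (i+s) := ih hs1 (by omega)
            have hmem : i + s ∈ DS n (w ∘ cval k) := by
              rw [← hEq, fik (i+s) (by omega) (by omega)]
              exact hw
            rw [gk (i+s) (by omega)] at hmem
            have e : i + s + 2 = i + (s+1) + 1 := by omega
            have e2 : i + s + 1 = i + (s+1) := by omega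
            rw [e, e2] at hmem
            exact hmem
      have claim2 : ∀ t, 1 ≤ t → t ≤ k - i → w (i+t) < w 0 := by
        intro t
        induction t with
        | zero => omega
        | succ s ih =>
          intro _ hs
          rcases Nat.eq_or_lt_of_le (show 1 ≤ s + 1 from by omega) with h1 | h1
          · have hs0 : s = 0 := by omega
            subst hs0; simpa using hb
          · have : w (i + s + 1) < w (i + s) := claim1 s (by omega) (by omega)
            have := ih (by omega) (by omega)
            have e2 : i + (s+1) = i + s + 1 := by omega
            rw [e2]; omega
      have hlast : k - 1 ∈ DS n (w ∘ cval i) := by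
        rw [fik (k-1) (by omega) (by omega)]
        have := claim1 (k-1-i) (by omega) (by omega)
        have e : i + (k-1-i) = k - 1 := by omega
        have e2 : k - 1 + 1 = k := by omega
        rw [e, e2] at this
        rwa [e2]
      rw [hEq, gk1] at hlast
      have := claim2 (k-i) (by omega) (by omega)
      have e : i + (k-i) = k := by omega
      rw [e] at this
      omega
    · -- k = i + 1
      have hk1 : k = i + 1 := by omega
      have hi' : i ∈ DS n (w ∘ cval k) := by
        rw [← hEq, fii]; exact ⟨by omega, hb⟩
      have : i = k - 1 := by omega
      rw [this, gk1] at hi'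
      rw [hk1] at hi'
      omega
  · -- ascending chain
    have hb' : w 0 < w (i+1) := str _ _ (by omega) (by omega) (by omega) hb
    rcases Nat.lt_or_ge (i+1) k with hk2 | hk2
    · have claim1 : ∀ t, 1 ≤ t → i + t ≤ k - 1 → w (i+t) < w (i+t+1) := by
        intro t
        induction t with
        | zero => omega
        | succ s ih =>
          intro _ hs
          rcases Nat.eq_or_lt_of_le (show 1 ≤ s + 1 from by omega) with h1 | h1
          · have hs0 : s = 0 := by omega
            subst hs0
            have hi' : i ∉ DS n (w ∘ cval k) := by
              rw [← hEq, fii]; intro hh; exact hb hh.2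
            rw [gk i (by omega)] at hi'
            have := str _ _ (by omega) (by omega) (by omega) hi'
            simpa using this
          · have hs1 : 1 ≤ s := by omega
            have hw : w (i+s) < w (i+s+1) := ih hs1 (by omega)
            have hmem : i + s ∉ DS n (w ∘ cval k) := by
              rw [← hEq, fik (i+s) (by omega) (by omega)]
              omega
            rw [gk (i+s) (by omega)] at hmem
            have := str _ _ (by omega) (by omega) (by omega) hmem
            have e : i + s + 2 = i + (s+1) + 1 := by omega
            have e2 : i + s + 1 = i + (s+1) := by omega
            rw [e, e2] at this
            exact this
      have claim2 : ∀ t, 1 ≤ t → t ≤ k - i → w 0 < w (i+t) := by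
        intro t
        induction t with
        | zero => omega
        | succ s ih =>
          intro _ hs
          rcases Nat.eq_or_lt_of_le (show 1 ≤ s + 1 from by omega) with h1 | h1
          · have hs0 : s = 0 := by omega
            subst hs0; simpa using hb'
          · have h3 : w (i + s) < w (i + s + 1) := claim1 s (by omega) (by omega)
            have := ih (by omega) (by omega)
            have e2 : i + (s+1) = i + s + 1 := by omega
            rw [e2]; omega
      have hlast : k - 1 ∉ DS n (w ∘ cval i) := by
        rw [fik (k-1) (by omega) (by omega)]
        have := claim1 (k-1-i) (by omega) (by omega)
        have e : i + (k-1-i) = k - 1 := by omega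
        have e2 : k - 1 + 1 = k := by omega
        rw [e, e2] at this
        rw [e2]; omega
      rw [hEq, gk1] at hlast
      have := claim2 (k-i) (by omega) (by omega)
      have e : i + (k-i) = k := by omega
      rw [e] at this
      omega
    · have hk1 : k = i + 1 := by omega
      have hi' : i ∉ DS n (w ∘ cval k) := by
        rw [← hEq, fii]; intro hh; exact hb hh.2
      have : i = k - 1 := by omega
      rw [this, gk1] at hi'
      rw [hk1] at hi'
      omega

open Classical in
noncomputable def CF (n : ℕ) (D : Finset ℕ) : Finset (Finset ℕ) :=
  (Finset.range (n-1)).powerset.filter (fun S => ∃ i, Wit n D S i)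

lemma mem_CF {n : ℕ} {D S : Finset ℕ} : S ∈ CF n D ↔ S ⊆ Finset.range (n-1) ∧ ∃ i, Wit n D S i := by
  classical
  simp [CF, Finset.mem_filter, Finset.mem_powerset]

lemma Wit_det {S S' : Finset ℕ} {i : ℕ} (h : Wit n D S i) (h' : Wit n D S' i)
    (hb : i - 1 ∈ S ↔ i - 1 ∈ S') (hg : i ∈ S ↔ i ∈ S') : S = S' := by
  obtain ⟨-, -, h3, h4, h5, -⟩ := h
  obtain ⟨-, -, h3', h4', h5', -⟩ := h'
  ext j
  rcases Nat.lt_trichotomy j i with hj | rfl | hj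
  · rcases Nat.eq_or_lt_of_le (show j + 1 ≤ i by omega) with he | he
    · have : j = i - 1 := by omega
      rw [this]; exact hb
    · rw [h3 j he, h3' j he]
  · exact hg
  · rw [h4 j hj, h4' j hj]

lemma Wit_step_one (hn : 3 ≤ n) {S : Finset ℕ} (h : Wit n D S 1) :
    Wit n D S 0 ↔ (((0:ℕ) ∈ S ↔ (0:ℕ) ∈ D) ∧ ((1:ℕ) ∈ S ↔ (1:ℕ) ∈ D)) := by
  obtain ⟨h1, h2, h3, h4, h5, h6⟩ := h
  constructor
  · rintro ⟨-, -, -, g4, g5, -⟩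
    exact ⟨g5 rfl, g4 1 (by omega)⟩
  · rintro ⟨e0, e1⟩
    refine ⟨by omega, h2, fun j hj => by omega, ?_, fun _ => e0, by omega⟩
    intro j hj
    rcases Nat.eq_or_lt_of_le (show 1 ≤ j by omega) with he | he
    · rw [← he]; exact e1
    · exact h4 j he

lemma Wit_step (hn : 3 ≤ n) {S : Finset ℕ} {i : ℕ} (h : Wit n D S i) (h2 : 2 ≤ i)
    (hi : i + 1 < n) : Wit n D S (i-1) ↔ (i ∈ S ↔ i ∈ D) := by
  obtain ⟨g1, g2, g3, g4, g5, g6⟩ := h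
  constructor
  · rintro ⟨-, -, -, f4, -, -⟩
    exact f4 i (by omega)
  · intro e
    refine ⟨by omega, g2, fun j hj => g3 j (by omega), ?_, by omega, ?_⟩
    · intro j hj
      rcases Nat.eq_or_lt_of_le (show i ≤ j by omega) with he | he
      · rw [← he]; exact e
      · exact g4 j he
    · intro _ hle
      have key : i - 2 ∈ S ↔ i - 1 ∈ D := by
        have := g3 (i-2) (by omega)
        have e2 : i - 2 + 1 = i - 1 := by omega
        rwa [e2] at this
      have e3 : i - 1 - 1 = i - 2 := by omega
      rw [e3]
      constructor
      · rintro ⟨a, -⟩; exact key.mp a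
      · rintro ⟨a, -⟩ hd; exact a (key.mpr hd)

lemma Wit_last (hn : 3 ≤ n) (hD : D ⊆ Finset.range (n-1)) {S : Finset ℕ}
    (h : Wit n D S (n-1)) : Wit n D S (n-2) := by
  obtain ⟨g1, g2, g3, g4, g5, g6⟩ := h
  have key : n - 3 ∈ S ↔ n - 2 ∈ D := by
    have := g3 (n-3) (by omega)
    have e2 : n - 3 + 1 = n - 2 := by omega
    rwa [e2] at this
  refine ⟨by omega, g2, fun j hj => g3 j (by omega), ?_, by omega, ?_⟩
  · intro j hj
    constructor
    · intro hs; exact absurd (Finset.mem_range.mp (g2 hs)) (by omega)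
    · intro hd; exact absurd (Finset.mem_range.mp (hD hd)) (by omega)
  · intro _ _
    have e3 : n - 2 - 1 = n - 3 := by omega
    rw [e3]
    constructor
    · rintro ⟨a, -⟩; exact key.mp a
    · rintro ⟨a, -⟩ hd; exact a (key.mpr hd)

lemma card_CF_le (hn : 3 ≤ n) (hD : D ⊆ Finset.range (n-1)) : (CF n D).card ≤ n := by
  classical
  have key : (CF n D).card ≤ (Finset.range n).card := by
    apply Finset.card_le_card_of_injOn (fun S => if sInf {i | Wit n D S i} = 1 ∧ 1 ∈ S then n - 1 else sInf {i | Wit n D S i})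
    · -- maps to range n
      intro S hS
      obtain ⟨-, i0, hW⟩ := mem_CF.mp hS
      have hne : {i | Wit n D S i}.Nonempty := ⟨i0, show Wit n D S i0 from hW⟩
      have hmem : Wit n D S (sInf {i | Wit n D S i}) := Nat.sInf_mem hne
      have hlt : sInf {i | Wit n D S i} < n := hmem.1
      simp only [Finset.coe_range, Set.mem_Iio, Finset.mem_coe, Finset.mem_range]
      split_ifs <;> omega
    · -- injective
      intro S hS S' hS' henc
      obtain ⟨-, i0, hW0⟩ := mem_CF.mp hS
      obtain ⟨-, i0', hW0'⟩ := mem_CF.mp hS'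
      have hne : {i | Wit n D S i}.Nonempty := ⟨i0, show Wit n D S i0 from hW0⟩
      have hne' : {i | Wit n D S' i}.Nonempty := ⟨i0', show Wit n D S' i0' from hW0'⟩
      set a := sInf {i | Wit n D S i} with ha
      set a' := sInf {i | Wit n D S' i} with ha'
      have hW : Wit n D S a := Nat.sInf_mem hne
      have hW' : Wit n D S' a' := Nat.sInf_mem hne'
      have hmin : ∀ j, j < a → ¬ Wit n D S j := fun j hj => Nat.notMem_of_lt_sInf hj
      have hmin' : ∀ j, j < a' → ¬ Wit n D S' j := fun j hj => Nat.notMem_of_lt_sInf hj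
      -- minimal witness is not n-1
      have hne1 : a ≠ n - 1 := by
        intro hEq
        exact hmin (n-2) (by omega) (Wit_last hn hD (hEq ▸ hW))
      have hne1' : a' ≠ n - 1 := by
        intro hEq
        exact hmin' (n-2) (by omega) (Wit_last hn hD (hEq ▸ hW'))
      have han : a < n := hW.1
      have han' : a' < n := hW'.1
      -- the auxiliary symmetric steps at i = 1
      have aux1 : ∀ T T' : Finset ℕ, Wit n D T 1 → Wit n D T' 1 → ¬ Wit n D T 0 →
          ¬ Wit n D T' 0 → 1 ∈ T → 1 ∈ T' → 0 ∈ T → 0 ∈ T' := by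
        intro T T' w1 w1' nw0 nw0' m1 m1' m0
        have h1D : 1 ∈ D := (w1.2.2.2.2.2 (by omega) (by omega)).1 ⟨by simpa using m0, m1⟩
        have hT : ¬ (((0:ℕ) ∈ T ↔ (0:ℕ) ∈ D) ∧ ((1:ℕ) ∈ T ↔ (1:ℕ) ∈ D)) := by
          rw [← Wit_step_one hn w1]; exact nw0
        have hT' : ¬ (((0:ℕ) ∈ T' ↔ (0:ℕ) ∈ D) ∧ ((1:ℕ) ∈ T' ↔ (1:ℕ) ∈ D)) := by
          rw [← Wit_step_one hn w1']; exact nw0'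
        tauto
      have aux2 : ∀ T T' : Finset ℕ, Wit n D T 1 → Wit n D T' 1 → ¬ Wit n D T 0 →
          ¬ Wit n D T' 0 → 1 ∉ T → 1 ∉ T' → 0 ∈ T → 0 ∈ T' := by
        intro T T' w1 w1' nw0 nw0' m1 m1' m0
        by_contra hm0'
        have h1D : 1 ∉ D := (w1'.2.2.2.2.2 (by omega) (by omega)).2 ⟨by simpa using hm0', m1'⟩
        have hT : ¬ (((0:ℕ) ∈ T ↔ (0:ℕ) ∈ D) ∧ ((1:ℕ) ∈ T ↔ (1:ℕ) ∈ D)) := by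
          rw [← Wit_step_one hn w1]; exact nw0
        have hT' : ¬ (((0:ℕ) ∈ T' ↔ (0:ℕ) ∈ D) ∧ ((1:ℕ) ∈ T' ↔ (1:ℕ) ∈ D)) := by
          rw [← Wit_step_one hn w1']; exact nw0'
        tauto
      -- main case analysis on minimal witnesses
      simp only at henc
      by_cases hsp : a = 1 ∧ 1 ∈ S <;> by_cases hsp' : a' = 1 ∧ 1 ∈ S'
      · -- both special
        obtain ⟨e1, m1⟩ := hsp
        obtain ⟨e1', m1'⟩ := hsp'
        rw [e1] at hW hmin
        rw [e1'] at hW' hmin'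
        have nw0 : ¬ Wit n D S 0 := hmin 0 (by omega)
        have nw0' : ¬ Wit n D S' 0 := hmin' 0 (by omega)
        refine Wit_det (i := 1) hW hW' ?_ (iff_of_true m1 m1')
        exact ⟨fun h => aux1 S S' hW hW' nw0 nw0' m1 m1' h,
               fun h => aux1 S' S hW' hW nw0' nw0 m1' m1 h⟩
      · rw [if_pos hsp, if_neg hsp'] at henc
        omega
      · rw [if_neg hsp, if_pos hsp'] at henc
        omega
      · rw [if_neg hsp, if_neg hsp'] at henc
        rw [← ha, ← ha'] at henc
        rw [show a' = a from henc.symm] at hW' hmin' hne1' hsp'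
        rcases Nat.lt_or_ge a 2 with h2 | h2
        · rcases Nat.eq_or_lt_of_le (show 0 ≤ a by omega) with e0 | e0
          · -- a = 0
            rw [← e0] at hW hW'
            have i1 : (0:ℕ) ∈ S ↔ (0:ℕ) ∈ D := hW.2.2.2.2.1 rfl
            have i2 : (0:ℕ) ∈ S' ↔ (0:ℕ) ∈ D := hW'.2.2.2.2.1 rfl
            exact Wit_det (i := 0) hW hW' (i1.trans i2.symm) (i1.trans i2.symm)
          · -- a = 1, not special
            have e1 : a = 1 := by omega
            rw [e1] at hW hW' hmin hmin' hsp hsp'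
            have m1 : 1 ∉ S := fun h => hsp ⟨rfl, h⟩
            have m1' : 1 ∉ S' := fun h => hsp' ⟨rfl, h⟩
            have nw0 : ¬ Wit n D S 0 := hmin 0 (by omega)
            have nw0' : ¬ Wit n D S' 0 := hmin' 0 (by omega)
            refine Wit_det (i := 1) hW hW' ?_ (iff_of_false m1 m1')
            exact ⟨fun h => aux2 S S' hW hW' nw0 nw0' m1 m1' h,
                   fun h => aux2 S' S hW' hW nw0' nw0 m1' m1 h⟩
        · -- 2 ≤ a ≤ n - 2
          have han2 : a + 1 < n := by omega
          have hstep : ¬ (a ∈ S ↔ a ∈ D) := by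
            rw [← Wit_step hn hW h2 han2]
            exact hmin (a-1) (by omega)
          have hstep' : ¬ (a ∈ S' ↔ a ∈ D) := by
            rw [← Wit_step hn hW' h2 han2]
            exact hmin' (a-1) (by omega)
          have hg : a ∈ S ↔ a ∈ S' := by
            constructor
            · intro h
              by_contra hc
              exact hstep' (iff_of_false hc (fun hd => hstep (iff_of_true h hd)))
            · intro h
              by_contra hc
              exact hstep (iff_of_false hc (fun hd => hstep' (iff_of_true h hd)))
          have r := hW.2.2.2.2.2 (by omega) han2
          have r' := hW'.2.2.2.2.2 (by omega) han2
          have hb : a - 1 ∈ S ↔ a - 1 ∈ S' := by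
            by_cases haD : a ∈ D
            · have mS : a ∉ S := fun h => hstep (iff_of_true h haD)
              have mS' : a ∉ S' := fun h => hstep' (iff_of_true h haD)
              have b1 : a - 1 ∈ S := by
                by_contra hc
                exact (r.2 ⟨hc, mS⟩) haD
              have b1' : a - 1 ∈ S' := by
                by_contra hc
                exact (r'.2 ⟨hc, mS'⟩) haD
              exact iff_of_true b1 b1'
            · have mS : a ∈ S := by
                by_contra hc
                exact hstep (iff_of_false hc haD)
              have mS' : a ∈ S' := by
                by_contra hc
                exact hstep' (iff_of_false hc haD)
              have b1 : a - 1 ∉ S := fun hc => haD (r.1 ⟨hc, mS⟩)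
              have b1' : a - 1 ∉ S' := fun hc => haD (r'.1 ⟨hc, mS'⟩)
              exact iff_of_false b1 b1'
          exact Wit_det hW hW' hb hg
  simpa using key

section assemble
open Equiv

lemma wd_inj (n : ℕ) (σ : Equiv.Perm (Fin n)) :
    ∀ a b, a < n → b < n → wd n σ a = wd n σ b → a = b := by
  intro a b ha hb h
  simp only [wd, dif_pos ha, dif_pos hb] at h
  have h2 : σ ⟨a, ha⟩ = σ ⟨b, hb⟩ := Fin.ext h
  have := σ.injective h2
  simpa [Fin.ext_iff] using this

lemma desSet_subset (n : ℕ) (σ : Equiv.Perm (Fin n)) : desSet n σ ⊆ Finset.range (n-1) :=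
  Finset.filter_subset _ _

lemma desSet_mul_c (m : ℕ) (σ : Equiv.Perm (Fin (m+1))) (i : Fin (m+1)) :
    desSet (m+1) (σ * Fin.cycleRange i) = DS (m+1) (wd (m+1) σ ∘ cval i.val) := by
  rw [desSet_eq, wd_mul_cycleRange]

lemma top_injective (m : ℕ) (σ : Equiv.Perm (Fin (m+1))) :
    Function.Injective (fun i : Fin (m+1) => desSet (m+1) (σ * Fin.cycleRange i)) := by
  intro i k h
  simp only [desSet_mul_c] at h
  by_contra hne
  rcases Nat.lt_trichotomy i.val k.val with hlt | heq | hlt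
  · exact DS_injective (wd_inj _ σ) hlt k.isLt h
  · exact hne (Fin.ext heq)
  · exact DS_injective (wd_inj _ σ) hlt i.isLt h.symm

lemma top_img (m : ℕ) (hm : 2 ≤ m) (σ : Equiv.Perm (Fin (m+1))) :
    Finset.image (fun i : Fin (m+1) => desSet (m+1) (σ * Fin.cycleRange i)) Finset.univ
      = CF (m+1) (desSet (m+1) σ) := by
  apply Finset.eq_of_subset_of_card_le
  · intro T hT
    obtain ⟨i, -, rfl⟩ := Finset.mem_image.mp hT
    rw [mem_CF]
    refine ⟨desSet_subset _ _, i.val, ?_⟩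
    rw [desSet_mul_c, desSet_eq]
    exact DS_sound (wd_inj _ σ) i.isLt
  · rw [Finset.card_image_of_injective _ (top_injective m σ), Finset.card_univ,
      Fintype.card_fin]
    exact card_CF_le (by omega) (desSet_subset _ _)

open Classical in
lemma top_count_eq (m : ℕ) (hm : 2 ≤ m) (σ : Equiv.Perm (Fin (m+1))) (S : Finset ℕ) :
    (Finset.univ.filter fun i : Fin (m+1) => desSet (m+1) (σ * Fin.cycleRange i) = S).card
      = if S ∈ CF (m+1) (desSet (m+1) σ) then 1 else 0 := by
  split_ifs with hS
  · rw [← top_img m hm σ] at hS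
    obtain ⟨i₀, -, rfl⟩ := Finset.mem_image.mp hS
    rw [Finset.card_eq_one]
    refine ⟨i₀, ?_⟩
    ext j
    simp only [Finset.mem_filter, Finset.mem_univ, true_and, Finset.mem_singleton]
    constructor
    · exact fun h => top_injective m σ h
    · rintro rfl; rfl
  · rw [Finset.card_eq_zero, Finset.filter_eq_empty_iff]
    intro i _ h
    exact hS (by rw [← top_img m hm σ]; exact Finset.mem_image.mpr ⟨i, Finset.mem_univ i, h⟩)

open Classical in
lemma top_count (m : ℕ) (hm : 2 ≤ m) (σ σ' : Equiv.Perm (Fin (m+1)))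
    (h : desSet (m+1) σ = desSet (m+1) σ') (S : Finset ℕ) :
    (Finset.univ.filter fun i : Fin (m+1) => desSet (m+1) (σ * Fin.cycleRange i) = S).card
      = (Finset.univ.filter fun i : Fin (m+1) => desSet (m+1) (σ' * Fin.cycleRange i) = S).card := by
  rw [top_count_eq m hm σ S, top_count_eq m hm σ' S, h]

/-- reverse-complement of a descent set -/
def rcS (n : ℕ) (T : Finset ℕ) : Finset ℕ :=
  (Finset.range (n-1)).filter (fun j => n-2-j ∉ T)

lemma mem_rcS {n : ℕ} {T : Finset ℕ} {j : ℕ} : j ∈ rcS n T ↔ j < n - 1 ∧ n-2-j ∉ T := by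
  simp [rcS]

lemma rcS_subset (n : ℕ) (T : Finset ℕ) : rcS n T ⊆ Finset.range (n-1) :=
  Finset.filter_subset _ _

lemma rcS_rcS {n : ℕ} {T : Finset ℕ} (hT : T ⊆ Finset.range (n-1)) : rcS n (rcS n T) = T := by
  ext j
  rw [mem_rcS]
  constructor
  · rintro ⟨h1, h2⟩
    rw [mem_rcS] at h2
    push_neg at h2
    have := h2 (by omega)
    have e : n - 2 - (n - 2 - j) = j := by omega
    rwa [e] at this
  · intro hj
    have h1 : j < n - 1 := Finset.mem_range.mp (hT hj)
    refine ⟨h1, ?_⟩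
    rw [mem_rcS]
    push_neg
    intro _
    have e : n - 2 - (n - 2 - j) = j := by omega
    rw [e]
    exact hj

lemma desSet_mul_rev (m : ℕ) (σ : Equiv.Perm (Fin (m+1))) :
    desSet (m+1) (σ * Fin.revPerm) = rcS (m+1) (desSet (m+1) σ) := by
  ext j
  rw [desSet_eq, mem_DS, mem_rcS, desSet_eq]
  constructor
  · rintro ⟨h1, h2⟩
    have hj : j < m := by omega
    refine ⟨by omega, ?_⟩
    rw [mem_DS]
    push_neg
    intro h3
    -- h2 : wd (σ * rev) (j+1) < wd (σ * rev) j
    have e1 : ∀ k (hk : k < m + 1), wd (m+1) (σ * Fin.revPerm) k = wd (m+1) σ (m - k) := by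
      intro k hk
      have hmk : m - k < m + 1 := by omega
      simp only [wd, dif_pos hk, dif_pos hmk]
      have hrev : Fin.rev (⟨k, hk⟩ : Fin (m+1)) = ⟨m - k, hmk⟩ := by
        apply Fin.ext
        rw [Fin.val_rev]
        show m + 1 - (k + 1) = m - k
        omega
      have : (σ * Fin.revPerm : Equiv.Perm (Fin (m+1))) (⟨k, hk⟩ : Fin (m+1)) = σ ⟨m - k, hmk⟩ := by
        rw [Equiv.Perm.mul_apply σ Fin.revPerm, Fin.revPerm_apply, hrev]
      rw [this]
    rw [e1 _ (by omega), e1 _ (by omega)] at h2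
    have e2 : m - (j + 1) = m + 1 - 2 - j := by omega
    have e3 : (m + 1 - 2 - j) + 1 = m - j := by omega
    rw [e2] at h2
    rw [e3]
    omega
  · rintro ⟨h1, h2⟩
    rw [mem_DS] at h2
    push_neg at h2
    have e3 : (m + 1 - 2 - j) + 1 = m - j := by omega
    have h2' := h2 (by omega)
    rw [e3] at h2'
    refine ⟨by omega, ?_⟩
    have e1 : ∀ k (hk : k < m + 1), wd (m+1) (σ * Fin.revPerm) k = wd (m+1) σ (m - k) := by
      intro k hk
      have hmk : m - k < m + 1 := by omega
      simp only [wd, dif_pos hk, dif_pos hmk]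
      have hrev : Fin.rev (⟨k, hk⟩ : Fin (m+1)) = ⟨m - k, hmk⟩ := by
        apply Fin.ext
        rw [Fin.val_rev]
        show m + 1 - (k + 1) = m - k
        omega
      have : (σ * Fin.revPerm : Equiv.Perm (Fin (m+1))) (⟨k, hk⟩ : Fin (m+1)) = σ ⟨m - k, hmk⟩ := by
        rw [Equiv.Perm.mul_apply σ Fin.revPerm, Fin.revPerm_apply, hrev]
      rw [this]
    rw [e1 _ (by omega), e1 _ (by omega)]
    have e2 : m - (j + 1) = m + 1 - 2 - j := by omega
    rw [e2]
    rcases Nat.lt_trichotomy (wd (m+1) σ (m + 1 - 2 - j)) (wd (m+1) σ (m - j)) with hh | hh | hh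
    · exact hh
    · exact absurd (wd_inj _ σ _ _ (by omega) (by omega) hh) (by omega)
    · exact absurd hh (by omega)

lemma bot_factor (m : ℕ) (σ : Equiv.Perm (Fin (m+1))) (i : Fin (m+1)) :
    σ * botCycle (m+1) i = ((σ * Fin.revPerm) * Fin.cycleRange i.rev) * Fin.revPerm := by
  rw [botCycle]
  simp only [mul_assoc]

open Classical in
lemma bot_count_eq (m : ℕ) (σ : Equiv.Perm (Fin (m+1))) (S : Finset ℕ)
    (hS : S ⊆ Finset.range m) :
    (Finset.univ.filter fun i : Fin (m+1) => desSet (m+1) (σ * botCycle (m+1) i) = S).card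
      = (Finset.univ.filter fun i : Fin (m+1) =>
          desSet (m+1) ((σ * Fin.revPerm) * Fin.cycleRange i) = rcS (m+1) S).card := by
  have hS' : S ⊆ Finset.range ((m+1) - 1) := by simpa using hS
  have key : ∀ i : Fin (m+1),
      desSet (m+1) (σ * botCycle (m+1) i) = S ↔
        desSet (m+1) ((σ * Fin.revPerm) * Fin.cycleRange i.rev) = rcS (m+1) S := by
    intro i
    rw [bot_factor, desSet_mul_rev m ((σ * Fin.revPerm) * Fin.cycleRange i.rev)]
    constructor
    · intro h
      rw [← h, rcS_rcS (desSet_subset _ _)]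
    · intro h
      rw [h, rcS_rcS hS']
  refine Finset.card_bij' (fun i _ => i.rev) (fun i _ => i.rev) ?_ ?_ ?_ ?_
  · intro a ha
    simp only [Finset.mem_filter, Finset.mem_univ, true_and] at ha ⊢
    exact (key a).mp ha
  · intro a ha
    simp only [Finset.mem_filter, Finset.mem_univ, true_and] at ha ⊢
    rw [key a.rev, Fin.rev_rev]
    exact ha
  · intro a _; exact Fin.rev_rev a
  · intro a _; exact Fin.rev_rev a

open Classical in
lemma bot_count (m : ℕ) (hm : 2 ≤ m) (σ σ' : Equiv.Perm (Fin (m+1)))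
    (h : desSet (m+1) σ = desSet (m+1) σ') (S : Finset ℕ) (hS : S ⊆ Finset.range m) :
    (Finset.univ.filter fun i : Fin (m+1) => desSet (m+1) (σ * botCycle (m+1) i) = S).card
      = (Finset.univ.filter fun i : Fin (m+1) => desSet (m+1) (σ' * botCycle (m+1) i) = S).card := by
  rw [bot_count_eq m σ S hS, bot_count_eq m σ' S hS]
  apply top_count m hm
  rw [desSet_mul_rev, desSet_mul_rev, h]

open Classical in
lemma count_sum (n : ℕ) (S : Finset ℕ) (f : Fin n → Equiv.Perm (Fin n)) :
    ∑ τ ∈ Finset.univ.filter (fun τ : Equiv.Perm (Fin n) => desSet n τ = S),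
        (Finset.univ.filter (fun i : Fin n => τ = f i)).card
      = (Finset.univ.filter (fun i : Fin n => desSet n (f i) = S)).card := by
  simp only [Finset.card_filter]
  rw [Finset.sum_comm]
  apply Finset.sum_congr rfl
  intro i _
  rw [Finset.sum_ite_eq' (Finset.univ.filter (fun τ : Equiv.Perm (Fin n) => desSet n τ = S))
    (f i) (fun _ => 1)]
  simp only [Finset.mem_filter, Finset.mem_univ, true_and]

end assemble

lemma desSet_two_inj : ∀ σ σ' : Equiv.Perm (Fin 2), desSet 2 σ = desSet 2 σ' → σ = σ' := by
  decide

/-- The descent set is a Markov statistic for the top-or-bottom-to-random shuffle. -/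
theorem stmt10 (n : ℕ) (hn : 1 ≤ n) (q : ℝ) (hq : q ∈ Set.Icc (0 : ℝ) 1)
    (σ σ' : Equiv.Perm (Fin n)) (h : desSet n σ = desSet n σ') (S : Finset ℕ) :
    ∑ τ ∈ Finset.univ.filter (fun τ : Equiv.Perm (Fin n) => desSet n τ = S), Pq n q σ τ =
    ∑ τ ∈ Finset.univ.filter (fun τ : Equiv.Perm (Fin n) => desSet n τ = S), Pq n q σ' τ := by
  classical
  by_cases hS : S ⊆ Finset.range (n - 1)
  swap
  · -- S is not a possible descent set at all: the sum is over the empty set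
    have : Finset.univ.filter (fun τ : Equiv.Perm (Fin n) => desSet n τ = S) = ∅ := by
      rw [Finset.filter_eq_empty_iff]
      intro τ _ hτ
      exact hS (hτ ▸ desSet_subset n τ)
    rw [this]
    simp
  · -- key sum decomposition, valid for any σ
    have decomp : ∀ ρ : Equiv.Perm (Fin n),
        ∑ τ ∈ Finset.univ.filter (fun τ : Equiv.Perm (Fin n) => desSet n τ = S), Pq n q ρ τ
          = q / n * ((Finset.univ.filter
              (fun i : Fin n => desSet n (ρ * Fin.cycleRange i) = S)).card : ℝ)
            + (1 - q) / n * ((Finset.univ.filter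
              (fun i : Fin n => desSet n (ρ * botCycle n i) = S)).card : ℝ) := by
      intro ρ
      simp only [Pq]
      rw [Finset.sum_add_distrib]
      congr 1
      · rw [← Finset.mul_sum]
        congr 1
        rw [← Nat.cast_sum]
        rw [count_sum n S (fun i => ρ * Fin.cycleRange i)]
      · rw [← Finset.mul_sum]
        congr 1
        rw [← Nat.cast_sum]
        rw [count_sum n S (fun i => ρ * botCycle n i)]
    rw [decomp σ, decomp σ']
    obtain ⟨m, rfl⟩ : ∃ m, n = m + 1 := ⟨n - 1, by omega⟩
    rcases Nat.lt_or_ge m 2 with hm | hm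
    · -- n = 1 or n = 2 : the descent set determines the permutation
      have hσ : σ = σ' := by
        interval_cases m
        · exact Equiv.ext fun x => Fin.ext (by
            have h1 := (σ x).isLt
            have h2 := (σ' x).isLt
            omega)
        · exact desSet_two_inj σ σ' h
      rw [hσ]
    · have hS' : S ⊆ Finset.range m := by simpa using hS
      rw [top_count m hm σ σ' h S, bot_count m hm σ σ' h S hS']
end
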